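/- arXiv:1503.02798 — 6 statements merged into one kernel-verified Lean document; each statement's English description precedes it below -/
import Mathlib

section
/- Let p be an odd prime and m a positive integer coprime to p. Then S(p; p) := ∑_{a=1, (a,p)=1}^{p-1} (1/a²) ∑_{i=1, (i,p)=1}^{am-1} 1/i ≡ m²·B_{p-3} (mod p), as a congruence of rational numbers whose denominators are coprime to p. -/
open Finset

/-- `x ≡ y (mod N)` for rationals: the denominator of `x - y` is coprime to `N`
and `N` divides the numerator of `x - y`. -/
def ratCong (N : ℕ) (x y : ℚ) : Prop :=
  Nat.Coprime (x - y).den N ∧ (N : ℤ) ∣ (x - y).num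

/-- `S p m n = ∑_{a=1, gcd(a,p)=1}^{n-1} (1/a²) ∑_{i=1, gcd(i,p)=1}^{am-1} 1/i`. -/
def S (p m n : ℕ) : ℚ :=
  ∑ a ∈ Finset.Ico 1 n,
    if Nat.Coprime a p then
      (1 / (a : ℚ) ^ 2) * ∑ i ∈ Finset.Ico 1 (a * m), (if Nat.Coprime i p then 1 / (i : ℚ) else 0)
    else 0

namespace SAux

set_option linter.unusedSectionVars false

variable {p : ℕ} [hp : Fact p.Prime]


/-- `q` is `p`-integral. -/
def Good (p : ℕ) (q : ℚ) : Prop := Nat.Coprime q.den p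

lemma good_den_ne_zero {q : ℚ} (h : Good p q) : ((q.den : ZMod p) ≠ 0) := by
  rw [Ne, ZMod.natCast_eq_zero_iff]
  exact (Nat.Prime.coprime_iff_not_dvd hp.out).mp h.symm

lemma good_int (n : ℤ) : Good p (n : ℚ) := by
  simp [Good, Rat.den_intCast, Nat.coprime_one_left]

lemma good_nat (n : ℕ) : Good p (n : ℚ) := by
  simpa using good_int (p := p) (n : ℤ)

lemma good_add {a b : ℚ} (ha : Good p a) (hb : Good p b) : Good p (a + b) :=
  Nat.Coprime.coprime_dvd_left (Rat.add_den_dvd a b) (Nat.Coprime.mul ha hb)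

lemma good_mul {a b : ℚ} (ha : Good p a) (hb : Good p b) : Good p (a * b) :=
  Nat.Coprime.coprime_dvd_left (Rat.mul_den_dvd a b) (Nat.Coprime.mul ha hb)

lemma good_neg {a : ℚ} (ha : Good p a) : Good p (-a) := by
  unfold Good; rwa [Rat.den_neg_eq_den]

lemma good_sub {a b : ℚ} (ha : Good p a) (hb : Good p b) : Good p (a - b) := by
  rw [sub_eq_add_neg]; exact good_add ha (good_neg hb)

lemma good_sum {ι : Type*} {s : Finset ι} {f : ι → ℚ} (h : ∀ i ∈ s, Good p (f i)) :
    Good p (∑ i ∈ s, f i) := by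
  classical
  induction s using Finset.induction_on with
  | empty => simpa using good_int (p := p) 0
  | insert _ _ hx ih =>
    rw [Finset.sum_insert hx]
    exact good_add (h _ (Finset.mem_insert_self _ _))
      (ih fun i hi => h i (Finset.mem_insert_of_mem hi))

lemma cast_add {a b : ℚ} (ha : Good p a) (hb : Good p b) :
    ((a + b : ℚ) : ZMod p) = (a : ZMod p) + (b : ZMod p) :=
  Rat.cast_add_of_ne_zero (good_den_ne_zero ha) (good_den_ne_zero hb)

lemma cast_mul {a b : ℚ} (ha : Good p a) (hb : Good p b) :
    ((a * b : ℚ) : ZMod p) = (a : ZMod p) * (b : ZMod p) :=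
  Rat.cast_mul_of_ne_zero (good_den_ne_zero ha) (good_den_ne_zero hb)

lemma cast_sub {a b : ℚ} (ha : Good p a) (hb : Good p b) :
    ((a - b : ℚ) : ZMod p) = (a : ZMod p) - (b : ZMod p) :=
  Rat.cast_sub_of_ne_zero (good_den_ne_zero ha) (good_den_ne_zero hb)

lemma cast_sum {ι : Type*} {s : Finset ι} {f : ι → ℚ} (h : ∀ i ∈ s, Good p (f i)) :
    ((∑ i ∈ s, f i : ℚ) : ZMod p) = ∑ i ∈ s, ((f i : ℚ) : ZMod p) := by
  classical
  induction s using Finset.induction_on with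
  | empty => simp
  | insert _ _ hx ih =>
    rw [Finset.sum_insert hx, Finset.sum_insert hx,
      cast_add (h _ (Finset.mem_insert_self _ _))
        (good_sum fun i hi => h i (Finset.mem_insert_of_mem hi)),
      ih fun i hi => h i (Finset.mem_insert_of_mem hi)]

lemma good_inv_nat {n : ℕ} (h : ¬ p ∣ n) : Good p (1 / (n : ℚ)) := by
  have h1 : (1 / (n : ℚ)) = (Rat.divInt 1 (n : ℤ)) := by
    rw [Rat.divInt_eq_div]; push_cast; ring
  rw [Good, h1]
  have hd : ((Rat.divInt 1 (n:ℤ)).den : ℤ) ∣ (n : ℤ) := Rat.den_dvd 1 n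
  have hd' : (Rat.divInt 1 (n:ℤ)).den ∣ n := by exact_mod_cast hd
  exact Nat.Coprime.coprime_dvd_left hd'
    ((Nat.coprime_comm).mp ((Nat.Prime.coprime_iff_not_dvd hp.out).mpr h))

lemma cast_inv_nat {n : ℕ} (h : ¬ p ∣ n) : ((1 / (n : ℚ) : ℚ) : ZMod p) = (n : ZMod p)⁻¹ := by
  have hn : (((n:ℚ)).num : ZMod p) ≠ 0 := by
    rw [Rat.num_natCast]
    simpa [ZMod.natCast_eq_zero_iff] using h
  rw [one_div, Rat.cast_inv_of_ne_zero hn, Rat.cast_natCast]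




lemma sum_range_univ {M : Type*} [AddCommMonoid M] (f : ZMod p → M) :
    ∑ b ∈ range p, f (b : ZMod p) = ∑ x : ZMod p, f x := by
  exact Finset.sum_nbij' (fun b => (b : ZMod p)) (fun x => x.val)
    (fun a _ => Finset.mem_univ _)
    (fun x _ => Finset.mem_range.mpr (ZMod.val_lt x))
    (fun a ha => ZMod.val_natCast_of_lt (Finset.mem_range.mp ha))
    (fun x _ => ZMod.natCast_rightInverse x)
    (fun a _ => rfl)

lemma inv_eq_pow (hp2 : p ≠ 2) (x : ZMod p) : x⁻¹ = x ^ (p - 2) := by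
  have h3 : 3 ≤ p := (hp.out.two_le).lt_of_ne (Ne.symm hp2)
  rcases eq_or_ne x 0 with rfl | hx
  · rw [inv_zero, zero_pow]; omega
  · have h1 : x * x ^ (p - 2) = 1 := by
      have := ZMod.pow_card_sub_one_eq_one hx
      calc x * x ^ (p - 2) = x ^ (p - 1) := by
            rw [← pow_succ']; congr 1; omega
        _ = 1 := this
    exact (eq_inv_of_mul_eq_one_right h1).symm

lemma sum_pow_univ (hp2 : p ≠ 2) (t : ℕ) (ht : t ≠ 0) :
    ∑ x : ZMod p, x ^ t = if (p - 1) ∣ t then -1 else 0 := by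
  classical
  have hcard : Fintype.card (ZMod p) = p := ZMod.card p
  have hu := FiniteField.sum_pow_units (ZMod p) t
  rw [hcard] at hu
  rw [← hu]
  rw [← Finset.sum_erase_add Finset.univ _ (Finset.mem_univ (0 : ZMod p)),
    zero_pow ht, add_zero]
  apply Finset.sum_nbij' (fun x => if h : x = (0:ZMod p) then 1 else Units.mk0 x h)
    (fun u => (u : ZMod p))
  · intro a _; exact Finset.mem_univ _
  · intro u _
    exact Finset.mem_erase.mpr ⟨Units.ne_zero u, Finset.mem_univ _⟩
  · intro a ha
    have : a ≠ 0 := (Finset.mem_erase.mp ha).1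
    simp [this]
  · intro u _
    have : (u : ZMod p) ≠ 0 := Units.ne_zero u
    simp [this]
  · intro a ha
    have h0 : a ≠ 0 := (Finset.mem_erase.mp ha).1
    simp [h0]

lemma sum_pow_range (hp2 : p ≠ 2) (t : ℕ) (ht : t ≠ 0) :
    ∑ b ∈ range p, ((b : ZMod p)) ^ t = if (p - 1) ∣ t then -1 else 0 := by
  rw [sum_range_univ (fun x : ZMod p => x ^ t)]
  exact sum_pow_univ hp2 t ht

lemma block_sum_zero (hp2 : p ≠ 2) : ∑ i ∈ range p, ((i : ZMod p))⁻¹ = 0 := by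
  have h3 : 3 ≤ p := (hp.out.two_le).lt_of_ne (Ne.symm hp2)
  simp only [inv_eq_pow hp2]
  rw [sum_range_univ (fun x : ZMod p => x ^ (p - 2))]
  have : Fintype.card (ZMod p) = p := ZMod.card p
  apply FiniteField.sum_pow_lt_card_sub_one
  omega

lemma sum_inv_block (hp2 : p ≠ 2) (q r : ℕ) :
    ∑ i ∈ range (p * q + r), ((i : ZMod p))⁻¹ = ∑ i ∈ range r, ((i : ZMod p))⁻¹ := by
  induction q with
  | zero => simp
  | succ q ih =>
    have : p * (q + 1) + r = p + (p * q + r) := by ring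
    rw [this, Finset.sum_range_add]
    have h2 : ∀ x ∈ range (p * q + r), (((p + x : ℕ) : ZMod p))⁻¹ = ((x : ZMod p))⁻¹ := by
      intro x _
      push_cast
      rw [ZMod.natCast_self, zero_add]
    rw [Finset.sum_congr rfl h2, block_sum_zero hp2, zero_add, ih]

lemma sum_inv_mod (hp2 : p ≠ 2) (n : ℕ) :
    ∑ i ∈ range n, ((i : ZMod p))⁻¹ = ∑ i ∈ range (n % p), ((i : ZMod p))⁻¹ := by
  conv_lhs => rw [show n = p * (n / p) + n % p from (Nat.div_add_mod n p).symm]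
  exact sum_inv_block hp2 (n / p) (n % p)


lemma good_bernoulli : ∀ j : ℕ, j + 1 < p → Good p (bernoulli j) := by
  intro j
  induction j using Nat.strong_induction_on with
  | _ j ih =>
    intro hj
    rcases Nat.eq_zero_or_pos j with rfl | hj0
    · rw [bernoulli_zero]; exact good_int 1
    · have hsum := sum_bernoulli (j + 1)
      rw [if_neg (by omega)] at hsum
      rw [Finset.sum_range_succ, Nat.choose_succ_self_right] at hsum
      -- hsum : (∑ k ∈ range j, ((j+1).choose k : ℚ) * bernoulli k) + (j+1) * bernoulli j = 0
      have hj1 : ((j : ℚ) + 1) ≠ 0 := by positivity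
      have hB : bernoulli j =
          (-(1 / ((j + 1 : ℕ) : ℚ))) * ∑ k ∈ range j, ((j+1).choose k : ℚ) * bernoulli k := by
        push_cast at hsum ⊢
        field_simp
        linarith [hsum]
      rw [hB]
      refine good_mul (good_neg (good_inv_nat (fun hd => absurd (Nat.le_of_dvd (by omega) hd) (by omega)))) (good_sum fun k hk => ?_)
      exact good_mul (good_nat _) (ih k (Finset.mem_range.mp hk) (by
        have := Finset.mem_range.mp hk; omega))

/-- Cast of Faulhaber's formula to `ZMod p`. -/
lemma cast_faulhaber (hp2 : p ≠ 2) (b : ℕ) :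
    ∑ i ∈ range b, ((i : ZMod p)) ^ (p - 2) =
      ∑ j ∈ range (p - 1), ((bernoulli j : ℚ) : ZMod p) * (((p-1).choose j : ℕ) : ZMod p)
        * (b : ZMod p) ^ (p - 1 - j) * (((p - 1 : ℕ) : ZMod p))⁻¹ := by
  have h3 : 3 ≤ p := (hp.out.two_le).lt_of_ne (Ne.symm hp2)
  have h1 : p - 2 + 1 = p - 1 := by omega
  have hfa := sum_range_pow b (p - 2)
  rw [h1] at hfa
  -- rewrite RHS of hfa into products of good factors
  have hden : ¬ p ∣ (p - 1) := fun hd => absurd (Nat.le_of_dvd (by omega) hd) (by omega)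
  have hrw : ∀ j ∈ range (p - 1),
      bernoulli j * (((p-1).choose j : ℕ) : ℚ) * (b : ℚ) ^ (p - 1 - j) / (((p-2 : ℕ) : ℚ) + 1)
      = bernoulli j * (((p-1).choose j : ℕ) : ℚ) * (((b ^ (p - 1 - j) : ℕ) : ℚ))
        * (1 / (((p - 1 : ℕ)) : ℚ)) := by
    intro j _
    have : (((p-2 : ℕ) : ℚ) + 1) = (((p - 1 : ℕ)) : ℚ) := by
      push_cast [Nat.cast_sub (by omega : 2 ≤ p), Nat.cast_sub (by omega : 1 ≤ p)]; ring
    rw [this]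
    push_cast
    ring
  rw [Finset.sum_congr rfl hrw] at hfa
  have hlhs : ∀ i ∈ range b, ((i : ℚ)) ^ (p - 2) = (((i ^ (p-2) : ℕ)) : ℚ) := by
    intro i _; push_cast; ring
  rw [Finset.sum_congr rfl hlhs] at hfa
  -- now cast hfa to ZMod p
  have goodterm : ∀ j ∈ range (p - 1), Good p (bernoulli j * (((p-1).choose j : ℕ) : ℚ)
      * (((b ^ (p - 1 - j) : ℕ) : ℚ)) * (1 / (((p - 1 : ℕ)) : ℚ))) := by
    intro j hj
    have hjp : j + 1 < p := by have := Finset.mem_range.mp hj; omega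
    exact good_mul (good_mul (good_mul (good_bernoulli j hjp) (good_nat _)) (good_nat _))
      (good_inv_nat hden)
  have := congrArg (fun q : ℚ => (q : ZMod p)) hfa
  rw [cast_sum (fun i _ => good_nat _), cast_sum goodterm] at this
  calc ∑ i ∈ range b, ((i : ZMod p)) ^ (p - 2)
      = ∑ i ∈ range b, (((i ^ (p-2) : ℕ) : ℚ) : ZMod p) := by
        apply Finset.sum_congr rfl; intro i _; push_cast; ring
    _ = ∑ j ∈ range (p - 1), ((bernoulli j * (((p-1).choose j : ℕ) : ℚ)
        * (((b ^ (p - 1 - j) : ℕ) : ℚ)) * (1 / (((p - 1 : ℕ)) : ℚ)) : ℚ) : ZMod p) := this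
    _ = _ := by
        apply Finset.sum_congr rfl; intro j hj
        have hjp : j + 1 < p := by have := Finset.mem_range.mp hj; omega
        rw [cast_mul (good_mul (good_mul (good_bernoulli j hjp) (good_nat _)) (good_nat _))
            (good_inv_nat hden),
          cast_mul (good_mul (good_bernoulli j hjp) (good_nat _)) (good_nat _),
          cast_mul (good_bernoulli j hjp) (good_nat _), cast_inv_nat hden]
        push_cast
        ring


lemma key (hp2 : p ≠ 2) :
    ∑ b ∈ range p, (((b : ZMod p)) ^ 2)⁻¹ * ∑ i ∈ range b, ((i : ZMod p))⁻¹
      = ((bernoulli (p - 3) : ℚ) : ZMod p) := by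
  have h3 : 3 ≤ p := (hp.out.two_le).lt_of_ne (Ne.symm hp2)
  have hm1 : (((p - 1 : ℕ)) : ZMod p) = -1 := by
    rw [Nat.cast_sub (by omega : 1 ≤ p)]; simp [ZMod.natCast_self]
  have hm2 : (((p - 2 : ℕ)) : ZMod p) = -2 := by
    rw [Nat.cast_sub (by omega : 2 ≤ p)]; simp [ZMod.natCast_self]
  have h2ne : (2 : ZMod p) ≠ 0 := by
    have h : ¬ p ∣ 2 := fun hd => hp2 (by
      have := Nat.le_of_dvd (by omega) hd
      omega)
    have := (not_iff_not.mpr (ZMod.natCast_eq_zero_iff 2 p)).mpr h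
    push_cast at this
    exact this
  -- the choose value
  have hchoose : (((p-1).choose (p-3) : ℕ) : ZMod p) = 1 := by
    have e1 : (p-1).choose (p-3) = (p-1).choose 2 := by
      have h0 : p - 3 = (p-1) - 2 := by omega
      rw [h0, Nat.choose_symm (by omega : 2 ≤ p - 1)]
    have hdvd : 2 ∣ (p-1) * (p-1-1) := by
      rcases Nat.even_or_odd (p-1) with he | ho
      · exact Dvd.dvd.mul_right he.two_dvd _
      · rcases ho with ⟨k, hk⟩
        exact Dvd.dvd.mul_left (by omega : 2 ∣ (p-1-1)) _
    have e2 : 2 * ((p-1).choose 2) = (p-1) * (p-2) := by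
      rw [Nat.choose_two_right, Nat.mul_div_cancel' hdvd]
      congr 1
    have e3 : ((2 : ℕ) : ZMod p) * (((p-1).choose 2 : ℕ) : ZMod p)
        = ((p-1 : ℕ) : ZMod p) * ((p-2 : ℕ) : ZMod p) := by
      rw [← Nat.cast_mul, ← Nat.cast_mul, e2]
    rw [hm1, hm2] at e3
    push_cast at e3
    rw [e1]
    apply mul_left_cancel₀ h2ne
    rw [e3]; ring
  -- rewrite each term via Faulhaber
  have hstep : ∀ b ∈ range p, (((b : ZMod p)) ^ 2)⁻¹ * ∑ i ∈ range b, ((i : ZMod p))⁻¹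
      = ∑ j ∈ range (p - 1), (((bernoulli j : ℚ) : ZMod p) * (((p-1).choose j : ℕ) : ZMod p)
          * ((((p-1:ℕ)) : ZMod p))⁻¹) * (b : ZMod p) ^ ((p-2)*2 + (p - 1 - j)) := by
    intro b _
    have hb2 : (((b : ZMod p)) ^ 2)⁻¹ = (b : ZMod p) ^ ((p-2)*2) := by
      rw [← inv_pow, inv_eq_pow hp2, ← pow_mul]
    have hbi : ∀ i ∈ range b, ((i : ZMod p))⁻¹ = (i : ZMod p) ^ (p-2) :=
      fun i _ => inv_eq_pow hp2 _
    rw [hb2, Finset.sum_congr rfl hbi, cast_faulhaber hp2 b, Finset.mul_sum]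
    apply Finset.sum_congr rfl
    intro j _
    rw [pow_add]
    ring
  rw [Finset.sum_congr rfl hstep, Finset.sum_comm]
  have hj : ∀ j ∈ range (p-1),
      ∑ b ∈ range p, (((bernoulli j : ℚ) : ZMod p) * (((p-1).choose j : ℕ) : ZMod p)
          * ((((p-1:ℕ)) : ZMod p))⁻¹) * (b : ZMod p) ^ ((p-2)*2 + (p - 1 - j))
      = (((bernoulli j : ℚ) : ZMod p) * (((p-1).choose j : ℕ) : ZMod p)
          * ((((p-1:ℕ)) : ZMod p))⁻¹) * (if (p-1) ∣ ((p-2)*2 + (p - 1 - j)) then (-1 : ZMod p) else 0) := by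
    intro j hjm
    rw [← Finset.mul_sum, sum_pow_range hp2 _ (by
      have := Finset.mem_range.mp hjm
      omega)]
  rw [Finset.sum_congr rfl hj]
  rw [Finset.sum_eq_single (p - 3)]
  · have hd : (p-1) ∣ ((p-2)*2 + (p - 1 - (p-3))) := ⟨2, by omega⟩
    rw [if_pos hd, hchoose, hm1, inv_neg_one]
    ring
  · intro j hjm hne
    have hjlt := Finset.mem_range.mp hjm
    have hnd : ¬ (p-1) ∣ ((p-2)*2 + (p - 1 - j)) := by
      rintro ⟨k, hk⟩
      rcases k with _ | _ | _ | k
      · omega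
      · rw [Nat.mul_one] at hk; omega
      · omega
      · have hge : 3 * (p-1) ≤ (p-2)*2 + (p - 1 - j) := by
          calc 3 * (p-1) ≤ (p-1) * (k+3) := by
                rw [mul_comm]
                exact Nat.mul_le_mul le_rfl (by omega)
            _ = (p-2)*2 + (p - 1 - j) := hk.symm
        omega
    rw [if_neg hnd, mul_zero]
  · intro habs
    exact absurd (Finset.mem_range.mpr (by omega)) habs


lemma not_dvd_of_coprime {a : ℕ} (h : Nat.Coprime a p) : ¬ p ∣ a :=
  (Nat.Prime.coprime_iff_not_dvd hp.out).mp h.symm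

lemma coprime_of_lt {a : ℕ} (h1 : 1 ≤ a) (h2 : a < p) : Nat.Coprime a p :=
  Nat.coprime_comm.mp ((Nat.Prime.coprime_iff_not_dvd hp.out).mpr
    (fun hd => absurd (Nat.le_of_dvd (by omega) hd) (by omega)))

lemma good_inner (m a : ℕ) :
    Good p (∑ i ∈ Finset.Ico 1 (a * m), (if Nat.Coprime i p then 1 / (i : ℚ) else 0)) := by
  refine good_sum fun i _ => ?_
  split_ifs with h
  · exact good_inv_nat (not_dvd_of_coprime h)
  · exact good_nat 0

lemma good_sq_inv {a : ℕ} (h : Nat.Coprime a p) : Good p (1 / (a : ℚ) ^ 2) := by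
  have h2 : (1 / (a : ℚ) ^ 2) = 1 / ((a ^ 2 : ℕ) : ℚ) := by push_cast; ring
  rw [h2]
  refine good_inv_nat fun hd => not_dvd_of_coprime h (hp.out.dvd_of_dvd_pow hd)

lemma cast_sq_inv {a : ℕ} (h : Nat.Coprime a p) :
    ((1 / (a : ℚ) ^ 2 : ℚ) : ZMod p) = (((a : ZMod p)) ^ 2)⁻¹ := by
  have h2 : (1 / (a : ℚ) ^ 2) = 1 / ((a ^ 2 : ℕ) : ℚ) := by push_cast; ring
  rw [h2, cast_inv_nat (fun hd => not_dvd_of_coprime h (hp.out.dvd_of_dvd_pow hd))]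
  push_cast
  ring

lemma good_S (m : ℕ) : Good p (S p m p) := by
  refine good_sum fun a _ => ?_
  split_ifs with h
  · exact good_mul (good_sq_inv h) (good_inner m a)
  · exact good_nat 0

lemma cast_inner (hp2 : p ≠ 2) (m a : ℕ) (hm : 1 ≤ m) (ha : 1 ≤ a) :
    ((∑ i ∈ Finset.Ico 1 (a * m), (if Nat.Coprime i p then 1 / (i : ℚ) else 0) : ℚ) : ZMod p)
      = ∑ i ∈ range ((a * m) % p), ((i : ZMod p))⁻¹ := by
  have h1 : ((∑ i ∈ Finset.Ico 1 (a * m), (if Nat.Coprime i p then 1 / (i : ℚ) else 0) : ℚ) : ZMod p)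
      = ∑ i ∈ Finset.Ico 1 (a * m), ((i : ZMod p))⁻¹ := by
    rw [cast_sum (fun i _ => by
      split_ifs with h
      · exact good_inv_nat (not_dvd_of_coprime h)
      · exact good_nat 0)]
    refine Finset.sum_congr rfl fun i hi => ?_
    rcases Finset.mem_Ico.mp hi with ⟨hi1, _⟩
    split_ifs with h
    · exact cast_inv_nat (not_dvd_of_coprime h)
    · have hd : p ∣ i := by
        by_contra hnd
        exact h (Nat.coprime_comm.mp ((Nat.Prime.coprime_iff_not_dvd hp.out).mpr hnd))
      have : (i : ZMod p) = 0 := (ZMod.natCast_eq_zero_iff i p).mpr hd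
      rw [this, inv_zero]
      simp
  rw [h1]
  have h2 : ∑ i ∈ range (a * m), ((i : ZMod p))⁻¹ = ∑ i ∈ Finset.Ico 1 (a * m), ((i : ZMod p))⁻¹ := by
    rw [Finset.sum_range_eq_add_Ico _ (by positivity : 0 < a * m)]
    simp
  rw [← h2, sum_inv_mod hp2]

lemma cast_S (hp2 : p ≠ 2) (m : ℕ) (hm : 1 ≤ m) (hmp : Nat.Coprime m p) :
    ((S p m p : ℚ) : ZMod p) = ((m : ZMod p)) ^ 2 * ((bernoulli (p - 3) : ℚ) : ZMod p) := by
  have h3 : 3 ≤ p := hp.out.two_le.lt_of_ne (Ne.symm hp2)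
  have hmne : (m : ZMod p) ≠ 0 := by
    rw [Ne, ZMod.natCast_eq_zero_iff]
    exact not_dvd_of_coprime hmp
  set G : ZMod p → ZMod p := fun x => ∑ i ∈ range x.val, ((i : ZMod p))⁻¹ with hG
  have step1 : ((S p m p : ℚ) : ZMod p)
      = ∑ a ∈ Finset.Ico 1 p, (((a : ZMod p)) ^ 2)⁻¹ * G ((a : ZMod p) * (m : ZMod p)) := by
    rw [S, cast_sum (fun a _ => by
      split_ifs with h
      · exact good_mul (good_sq_inv h) (good_inner m a)
      · exact good_nat 0)]
    refine Finset.sum_congr rfl fun a ha => ?_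
    rcases Finset.mem_Ico.mp ha with ⟨ha1, ha2⟩
    have hcop : Nat.Coprime a p := coprime_of_lt ha1 ha2
    rw [if_pos hcop, cast_mul (good_sq_inv hcop) (good_inner m a), cast_sq_inv hcop,
      cast_inner hp2 m a hm ha1]
    congr 1
    have hval : ((a : ZMod p) * (m : ZMod p)).val = (a * m) % p := by
      rw [← Nat.cast_mul, ZMod.val_natCast]
    rw [hG]
    simp only [hval]
  rw [step1]
  have step2 : ∑ a ∈ Finset.Ico 1 p, (((a : ZMod p)) ^ 2)⁻¹ * G ((a : ZMod p) * (m : ZMod p))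
      = ∑ a ∈ range p, (((a : ZMod p)) ^ 2)⁻¹ * G ((a : ZMod p) * (m : ZMod p)) := by
    rw [Finset.sum_range_eq_add_Ico _ (by omega : 0 < p)]
    norm_num
  rw [step2, sum_range_univ (fun x : ZMod p => ((x) ^ 2)⁻¹ * G (x * (m : ZMod p)))]
  -- reindex x ↦ x * m
  have step3 : ∑ x : ZMod p, ((x) ^ 2)⁻¹ * G (x * (m : ZMod p))
      = ∑ y : ZMod p, (((y * ((m : ZMod p))⁻¹)) ^ 2)⁻¹ * G y := by
    rw [← Equiv.sum_comp (Equiv.mulRight₀ ((m : ZMod p)) hmne)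
      (fun y => (((y * ((m : ZMod p))⁻¹)) ^ 2)⁻¹ * G y)]
    refine Finset.sum_congr rfl fun x _ => ?_
    have : (Equiv.mulRight₀ ((m : ZMod p)) hmne) x = x * (m : ZMod p) := rfl
    rw [this, mul_inv_cancel_right₀ hmne]
  rw [step3]
  have step4 : ∑ y : ZMod p, (((y * ((m : ZMod p))⁻¹)) ^ 2)⁻¹ * G y
      = ((m : ZMod p)) ^ 2 * ∑ y : ZMod p, ((y ^ 2)⁻¹ * G y) := by
    rw [Finset.mul_sum]
    refine Finset.sum_congr rfl fun y _ => ?_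
    rw [mul_pow, mul_inv, inv_pow, inv_inv]
    ring
  rw [step4]
  congr 1
  rw [← sum_range_univ (fun x : ZMod p => ((x ^ 2)⁻¹ * G x)), ← key hp2]
  refine Finset.sum_congr rfl fun b hb => ?_
  have hbp : b < p := Finset.mem_range.mp hb
  rw [hG]
  simp only [ZMod.val_natCast, Nat.mod_eq_of_lt hbp]


end SAux

theorem S_p_congr (p m : ℕ) (hp : p.Prime) (hp2 : p ≠ 2) (hm : 1 ≤ m)
    (hmp : Nat.Coprime m p) :
    ratCong p (S p m p) ((m : ℚ) ^ 2 * bernoulli (p - 3)) := by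
  haveI : Fact p.Prime := ⟨hp⟩
  have h3 : 3 ≤ p := hp.two_le.lt_of_ne (Ne.symm hp2)
  set x := S p m p with hx
  set y := (m : ℚ) ^ 2 * bernoulli (p - 3) with hy
  have hgx : SAux.Good p x := SAux.good_S m
  have hmsq : ((m : ℚ)) ^ 2 = ((m ^ 2 : ℕ) : ℚ) := by push_cast; ring
  have hgy : SAux.Good p y := by
    rw [hy, hmsq]
    exact SAux.good_mul (SAux.good_nat _) (SAux.good_bernoulli (p - 3) (by omega))
  have hcy : ((y : ℚ) : ZMod p) = ((m : ZMod p)) ^ 2 * ((bernoulli (p - 3) : ℚ) : ZMod p) := by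
    rw [hy, hmsq, SAux.cast_mul (SAux.good_nat _) (SAux.good_bernoulli (p - 3) (by omega)),
      Rat.cast_natCast]
    push_cast
    ring
  have hzero : (((x - y : ℚ)) : ZMod p) = 0 := by
    rw [SAux.cast_sub hgx hgy, SAux.cast_S hp2 m hm hmp, hcy, sub_self]
  have hgxy : SAux.Good p (x - y) := SAux.good_sub hgx hgy
  refine ⟨hgxy, ?_⟩
  have hden : (((x - y).den : ZMod p)) ≠ 0 := by
    rw [Ne, ZMod.natCast_eq_zero_iff]
    exact SAux.not_dvd_of_coprime hgxy
  rw [Rat.cast_def] at hzero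
  rcases div_eq_zero_iff.mp hzero with h | h
  · exact (ZMod.intCast_zmod_eq_zero_iff_dvd _ p).mp h
  · exact absurd h hden
end

section
/- Let p be an odd prime and m a positive integer coprime to p. Then T(p; p) := ∑_{a=1, (a,p)=1}^{p-1} (1/a²) ∑_{1 ≤ i ≤ am-1, i ≡ am (mod p)} 1/i ≡ ((m³ - m)/(3m))·B_{p-3} (mod p), as a congruence of rational numbers whose denominators are coprime to p. -/
set_option maxRecDepth 8000

open Finset

/-- `T p m n = ∑_{a=1, gcd(a,p)=1}^{n-1} (1/a²) ∑_{1 ≤ i ≤ am-1, i ≡ am (mod p)} 1/i`. -/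
def T (p m n : ℕ) : ℚ :=
  ∑ a ∈ Finset.Ico 1 n,
    if Nat.Coprime a p then
      (1 / (a : ℚ) ^ 2) * ∑ i ∈ Finset.Ico 1 (a * m), (if i % p = (a * m) % p then 1 / (i : ℚ) else 0)
    else 0

/-- `x` is `p`-integral with image `u` in `ZMod p`. -/
def Good (p : ℕ) (x : ℚ) (u : ZMod p) : Prop :=
  ∃ n d : ℤ, x * d = n ∧ (d : ZMod p) ≠ 0 ∧ (n : ZMod p) = u * d

namespace Good
variable {p : ℕ} [Fact p.Prime] {x y : ℚ} {u v : ZMod p}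

lemma add (hx : Good p x u) (hy : Good p y v) : Good p (x + y) (u + v) := by
  obtain ⟨n1, d1, h1, hd1, hu1⟩ := hx
  obtain ⟨n2, d2, h2, hd2, hu2⟩ := hy
  refine ⟨n1 * d2 + n2 * d1, d1 * d2, ?_, ?_, ?_⟩
  · push_cast; linear_combination (d2 : ℚ) * h1 + (d1 : ℚ) * h2
  · push_cast; exact mul_ne_zero hd1 hd2
  · push_cast
    linear_combination (d2 : ZMod p) * hu1 + (d1 : ZMod p) * hu2

lemma mul (hx : Good p x u) (hy : Good p y v) : Good p (x * y) (u * v) := by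
  obtain ⟨n1, d1, h1, hd1, hu1⟩ := hx
  obtain ⟨n2, d2, h2, hd2, hu2⟩ := hy
  refine ⟨n1 * n2, d1 * d2, ?_, ?_, ?_⟩
  · push_cast; linear_combination (y * d2 : ℚ) * h1 + (n1 : ℚ) * h2
  · push_cast; exact mul_ne_zero hd1 hd2
  · push_cast
    linear_combination (n2 : ZMod p) * hu1 + u * (d1 : ZMod p) * hu2

lemma neg (hx : Good p x u) : Good p (-x) (-u) := by
  obtain ⟨n, d, h, hd, hu⟩ := hx
  exact ⟨-n, d, by push_cast; linear_combination -h, hd, by push_cast; linear_combination -hu⟩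

lemma sub (hx : Good p x u) (hy : Good p y v) : Good p (x - y) (u - v) := by
  simpa [sub_eq_add_neg] using hx.add hy.neg

lemma intCast (n : ℤ) : Good p (n : ℚ) (n : ZMod p) := by
  refine ⟨n, 1, by push_cast; ring, ?_, by push_cast; ring⟩
  · simp only [Int.cast_one]; exact one_ne_zero

lemma natCast (n : ℕ) : Good p (n : ℚ) (n : ZMod p) := by
  simpa using intCast (p := p) (n : ℤ)

lemma zero : Good p 0 0 := by simpa using natCast (p := p) 0

lemma one : Good p 1 1 := by simpa using natCast (p := p) 1

lemma sum {α : Type*} {s : Finset α} {f : α → ℚ} {g : α → ZMod p}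
    (h : ∀ a ∈ s, Good p (f a) (g a)) :
    Good p (∑ a ∈ s, f a) (∑ a ∈ s, g a) := by
  classical
  induction s using Finset.cons_induction with
  | empty => simpa using zero
  | cons a s ha ih =>
    rw [Finset.sum_cons, Finset.sum_cons]
    exact (h a (Finset.mem_cons_self a s)).add (ih fun b hb => h b (Finset.mem_cons.2 (Or.inr hb)))

lemma unique (hx : Good p x u) (hy : Good p x v) : u = v := by
  obtain ⟨n1, d1, h1, hd1, hu1⟩ := hx
  obtain ⟨n2, d2, h2, hd2, hu2⟩ := hy
  have hZ : n1 * d2 = n2 * d1 := by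
    have : (n1 : ℚ) * d2 = (n2 : ℚ) * d1 := by
      linear_combination (d1 : ℚ) * h2 - (d2 : ℚ) * h1
    exact_mod_cast this
  have hZ' : (n1 : ZMod p) * d2 = (n2 : ZMod p) * d1 := by
    exact_mod_cast congrArg (Int.cast : ℤ → ZMod p) hZ
  have : u * (d1 * d2) = v * (d1 * d2) := by
    calc u * (d1 * d2) = (u * d1) * d2 := by ring
    _ = (n1 : ZMod p) * d2 := by rw [hu1]
    _ = (n2 : ZMod p) * d1 := hZ'
    _ = (v * d2) * d1 := by rw [hu2]
    _ = v * (d1 * d2) := by ring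
  exact mul_right_cancel₀ (mul_ne_zero hd1 hd2) this

lemma inv_pow_nat (a : ℕ) (k : ℕ) (ha : (a : ZMod p) ≠ 0) :
    Good p (1 / (a : ℚ) ^ k) (((a : ZMod p) ^ k)⁻¹) := by
  have ha0 : (a : ℚ) ≠ 0 := by
    intro h
    apply ha
    have : a = 0 := by exact_mod_cast h
    simp [this]
  refine ⟨1, (a : ℤ) ^ k, ?_, ?_, ?_⟩
  · push_cast; field_simp
  · push_cast; exact pow_ne_zero _ ha
  · push_cast
    exact (inv_mul_cancel₀ (pow_ne_zero _ ha)).symm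

lemma inv_nat (a : ℕ) (ha : (a : ZMod p) ≠ 0) :
    Good p (1 / (a : ℚ)) (((a : ZMod p))⁻¹) := by
  have := inv_pow_nat (p := p) a 1 ha
  rwa [pow_one, pow_one] at this

lemma pow_nat (n k : ℕ) : Good p ((n : ℚ) ^ k) ((n : ZMod p) ^ k) := by
  have := natCast (p := p) (n ^ k)
  rwa [Nat.cast_pow, Nat.cast_pow] at this

lemma p_mul {s : ℚ} (hs : Good p s u) : Good p ((p : ℚ) * s) 0 := by
  obtain ⟨n, d, h, hd, hu⟩ := hs
  refine ⟨p * n, d, by push_cast; linear_combination (p : ℚ) * h, hd, ?_⟩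
  push_cast
  simp [ZMod.natCast_self]

end Good

/-- `x` is `p`-integral. -/
def PInt (p : ℕ) (x : ℚ) : Prop := ∃ u : ZMod p, Good p x u

namespace PInt
variable {p : ℕ} [Fact p.Prime] {x y : ℚ}

lemma add (hx : PInt p x) (hy : PInt p y) : PInt p (x + y) := by
  obtain ⟨u, hu⟩ := hx; obtain ⟨v, hv⟩ := hy; exact ⟨u + v, hu.add hv⟩

lemma mul (hx : PInt p x) (hy : PInt p y) : PInt p (x * y) := by
  obtain ⟨u, hu⟩ := hx; obtain ⟨v, hv⟩ := hy; exact ⟨u * v, hu.mul hv⟩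

lemma neg (hx : PInt p x) : PInt p (-x) := by
  obtain ⟨u, hu⟩ := hx; exact ⟨-u, hu.neg⟩

lemma natCast (n : ℕ) : PInt p (n : ℚ) := ⟨_, Good.natCast n⟩

lemma sum {α : Type*} {s : Finset α} {f : α → ℚ} (h : ∀ a ∈ s, PInt p (f a)) :
    PInt p (∑ a ∈ s, f a) := by
  classical
  choose g hg using h
  refine ⟨∑ a ∈ s, if ha : a ∈ s then g a ha else 0, Good.sum ?_⟩
  intro a ha
  rw [dif_pos ha]
  exact hg a ha

lemma inv_nat (n : ℕ) (hn : (n : ZMod p) ≠ 0) : PInt p (1 / (n : ℚ)) :=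
  ⟨_, Good.inv_nat n hn⟩

end PInt

lemma ratCong_of_good {p : ℕ} (hp : p.Prime) {x y : ℚ} (h : Good p (x - y) 0) :
    ratCong p x y := by
  obtain ⟨n, d, hnd, hd, hu⟩ := h
  have hd0 : (d : ℚ) ≠ 0 := by
    intro h0
    exact hd (by rw [show d = 0 from by exact_mod_cast h0]; simp)
  have hxy : x - y = (n : ℚ) / d := by
    field_simp
    linear_combination hnd
  have hden : ((x - y).den : ℤ) ∣ d := by
    rw [hxy]
    have := Rat.den_dvd n d
    rwa [Rat.divInt_eq_div] at this
  have hpd : ¬ (p : ℤ) ∣ d := by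
    intro hdvd
    exact hd ((ZMod.intCast_zmod_eq_zero_iff_dvd d p).2 hdvd)
  constructor
  · rw [Nat.coprime_comm]
    refine (Nat.Prime.coprime_iff_not_dvd hp).2 ?_
    intro hds
    exact hpd (dvd_trans (by exact_mod_cast hds) hden)
  · have hn : (p : ℤ) ∣ n := by
      rw [zero_mul] at hu
      exact (ZMod.intCast_zmod_eq_zero_iff_dvd n p).1 hu
    have hnum : (x - y).num * d = n * (x - y).den := by
      have hq : ((x - y).num : ℚ) * d = (n : ℚ) * (x - y).den := by
        rw [← Rat.num_div_den (x - y)] at hxy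
        field_simp at hxy
        linear_combination hxy
      exact_mod_cast hq
    have : (p : ℤ) ∣ (x - y).num * d := hnum ▸ hn.mul_right _
    rcases (Int.Prime.dvd_mul' (by exact_mod_cast hp) this) with h1 | h1
    · exact h1
    · exact absurd h1 hpd

lemma natCast_ne_zero_of_lt {p n : ℕ} [Fact p.Prime] (h0 : 0 < n) (h : n < p) :
    (n : ZMod p) ≠ 0 := by
  intro hc
  have := (ZMod.natCast_eq_zero_iff n p).1 hc
  have := Nat.le_of_dvd h0 this
  omega

lemma pint_bernoulli {p : ℕ} [Fact p.Prime] : ∀ j, j + 1 < p → PInt p (bernoulli j) := by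
  intro j
  induction j using Nat.strong_induction_on with
  | _ j ih =>
    intro hj
    rcases Nat.eq_zero_or_pos j with h0 | h1
    · subst h0
      rw [bernoulli_zero]
      exact ⟨1, Good.one⟩
    · have hs := sum_bernoulli (j + 1)
      rw [Finset.sum_range_succ, if_neg (by omega), Nat.choose_succ_self_right] at hs
      have hj0 : ((j : ℚ) + 1) ≠ 0 := by positivity
      push_cast at hs
      have hB : bernoulli j
          = (∑ k ∈ range j, (((j + 1).choose k : ℚ)) * bernoulli k) * (-(1 / ((j + 1 : ℕ) : ℚ))) := by
        push_cast
        field_simp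
        linear_combination hs
      rw [hB]
      refine PInt.mul (PInt.sum ?_) (PInt.neg (PInt.inv_nat _ ?_))
      · intro k hk
        rw [Finset.mem_range] at hk
        exact PInt.mul (PInt.natCast _) (ih k hk (by omega))
      · exact natCast_ne_zero_of_lt (by omega) (by omega)

lemma faulhaber {p : ℕ} [Fact p.Prime] (hp5 : 5 ≤ p) :
    ∃ r : ℚ, PInt p r ∧
      ∑ a ∈ Finset.Ico 1 p, (a : ℚ) ^ (p - 3) = p * bernoulli (p - 3) + p ^ 2 * r := by
  set k := p - 3 with hk
  have hk2 : 2 ≤ k := by omega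
  have hIco : ∑ a ∈ Ico 1 p, (a : ℚ) ^ k = ∑ i ∈ range p, (i : ℚ) ^ k := by
    rw [Finset.range_eq_Ico, Finset.sum_eq_sum_Ico_succ_bot (by omega : 0 < p)]
    simp [zero_pow (by omega : k ≠ 0)]
  have hk1 : (((k : ℚ)) + 1) ≠ 0 := by positivity
  refine ⟨∑ j ∈ range k, bernoulli j * ((k + 1).choose j : ℚ) * (p : ℚ) ^ (k - 1 - j) * (1 / ((k + 1 : ℕ) : ℚ)), ?_, ?_⟩
  · refine PInt.sum ?_
    intro j hj
    rw [Finset.mem_range] at hj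
    refine PInt.mul (PInt.mul (PInt.mul (pint_bernoulli j (by omega)) (PInt.natCast _)) ?_) (PInt.inv_nat _ ?_)
    · have : ((p : ℚ)) ^ (k - 1 - j) = (((p ^ (k - 1 - j) : ℕ)) : ℚ) := by push_cast; ring
      rw [this]; exact PInt.natCast _
    · exact natCast_ne_zero_of_lt (by omega) (by omega)
  · rw [hIco, sum_range_pow p k, Finset.sum_range_succ, Nat.choose_succ_self_right]
    have hlast : bernoulli k * ((k + 1 : ℕ) : ℚ) * (p : ℚ) ^ (k + 1 - k) / ((k : ℚ) + 1)
        = (p : ℚ) * bernoulli k := by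
      have : k + 1 - k = 1 := by omega
      rw [this]
      push_cast
      field_simp
    rw [hlast, Finset.mul_sum]
    rw [add_comm]
    congr 1
    apply Finset.sum_congr rfl
    intro j hj
    rw [Finset.mem_range] at hj
    have he : k + 1 - j = (k - 1 - j) + 2 := by omega
    rw [he, pow_add]
    push_cast
    field_simp

lemma card_res (p n : ℕ) (hp : 0 < p) (h : n % p ≠ 0) :
    ((Finset.Ico 1 n).filter (fun i => i % p = n % p)).card = n / p := by
  have key : ((Finset.Ico 1 n).filter (fun i => i % p = n % p)).card
      = (Finset.range (n / p)).card := by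
    apply Finset.card_bij' (fun i _ => i / p) (fun j _ => n % p + j * p)
    · intro i hi
      simp only [Finset.mem_filter, Finset.mem_Ico] at hi
      obtain ⟨⟨h1, h2⟩, h3⟩ := hi
      simp only [Finset.mem_range]
      have hle : i / p ≤ n / p := Nat.div_le_div_right (le_of_lt h2)
      rcases lt_or_eq_of_le hle with hlt | heq
      · exact hlt
      · exfalso
        have e1 : p * (i / p) + i % p = i := Nat.div_add_mod i p
        have e2 : p * (n / p) + n % p = n := Nat.div_add_mod n p
        rw [heq, h3] at e1
        omega
    · intro j hj
      simp only [Finset.mem_range] at hj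
      simp only [Finset.mem_filter, Finset.mem_Ico]
      have e2 : n % p + n / p * p = n := Nat.mod_add_div' n p
      have h3 : (j + 1) * p ≤ n / p * p := Nat.mul_le_mul_right p (by omega)
      rw [add_mul, one_mul] at h3
      refine ⟨⟨by omega, by linarith⟩, ?_⟩
      simp [Nat.add_mul_mod_self_right, Nat.mod_mod_of_dvd _ (dvd_refl p)]
    · intro i hi
      simp only [Finset.mem_filter, Finset.mem_Ico] at hi
      obtain ⟨⟨h1, h2⟩, h3⟩ := hi
      have e1 : p * (i / p) + i % p = i := Nat.div_add_mod i p
      rw [h3, Nat.mul_comm p (i / p)] at e1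
      omega
    · intro j hj
      have : (n % p + j * p) / p = j := by
        rw [Nat.add_mul_div_right _ _ hp, Nat.div_eq_of_lt (Nat.mod_lt n hp)]
        omega
      omega
  rw [key, Finset.card_range]

lemma pow_expand (P x y : ℤ) : ∀ K : ℕ, ∃ t : ℤ,
    (x + P * y) ^ (K + 1) = x ^ (K + 1) + (K + 1) * P * x ^ K * y + P ^ 2 * t := by
  intro K
  induction K with
  | zero => exact ⟨0, by ring⟩
  | succ K ih =>
    obtain ⟨t, ht⟩ := ih
    refine ⟨x * t + ((K : ℤ) + 1) * x ^ K * y ^ 2 + P * y * t, ?_⟩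
    have : (x + P * y) ^ (K + 1 + 1) = (x + P * y) ^ (K + 1) * (x + P * y) := by ring
    rw [this, ht]
    push_cast
    ring

lemma sum_b_eq {p m : ℕ} (hp : p.Prime) (hmp : m.Coprime p) (k : ℕ) :
    ∑ a ∈ Ico 1 p, (a * m % p) ^ k = ∑ a ∈ Ico 1 p, a ^ k := by
  have hp1 : 1 < p := hp.one_lt
  obtain ⟨w, -, hw⟩ := Nat.exists_mul_mod_eq_one_of_coprime hmp hp1
  have hpm : ¬ p ∣ m := (Nat.Prime.coprime_iff_not_dvd hp).1 hmp.symm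
  have hpw : ¬ p ∣ w := by
    intro h
    obtain ⟨c, rfl⟩ := h
    rw [show m * (p * c) = (m * c) * p from by ring, Nat.mul_mod_left] at hw
    omega
  have hmw : m * w ≡ 1 [MOD p] := by
    unfold Nat.ModEq
    rw [hw, Nat.mod_eq_of_lt hp1]
  have mem : ∀ (c : ℕ), ¬ p ∣ c → ∀ a ∈ Ico 1 p, a * c % p ∈ Ico 1 p := by
    intro c hc a ha
    rw [Finset.mem_Ico] at ha ⊢
    refine ⟨?_, Nat.mod_lt _ (by omega)⟩
    rcases Nat.eq_zero_or_pos (a * c % p) with h0 | h1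
    · exfalso
      have : p ∣ a * c := Nat.dvd_of_mod_eq_zero h0
      rcases (Nat.Prime.dvd_mul hp).1 this with h | h
      · have := Nat.le_of_dvd (by omega) h; omega
      · exact hc h
    · exact h1
  have inv1 : ∀ a ∈ Ico 1 p, (a * m % p) * w % p = a := by
    intro a ha
    rw [Finset.mem_Ico] at ha
    rw [Nat.mod_mul_mod, mul_assoc]
    calc a * (m * w) % p = a * 1 % p := (Nat.ModEq.mul_left a hmw)
    _ = a := by rw [mul_one]; exact Nat.mod_eq_of_lt ha.2
  have inv2 : ∀ a ∈ Ico 1 p, (a * w % p) * m % p = a := by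
    intro a ha
    rw [Finset.mem_Ico] at ha
    rw [Nat.mod_mul_mod, mul_assoc]
    calc a * (w * m) % p = a * 1 % p := (Nat.ModEq.mul_left a (by rwa [mul_comm] at hmw))
    _ = a := by rw [mul_one]; exact Nat.mod_eq_of_lt ha.2
  exact Finset.sum_bij' (fun a _ => a * m % p) (fun a _ => a * w % p)
    (mem m hpm) (mem w hpw) inv1 inv2 (fun a ha => rfl)

lemma sum_b_pow (p m k : ℕ) (hk : 1 ≤ k) :
    ∃ t : ℤ, ∑ a ∈ Ico 1 p, ((a * m % p : ℕ) : ℤ) ^ k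
      = (m : ℤ) ^ k * ∑ a ∈ Ico 1 p, (a : ℤ) ^ k
        - (k : ℤ) * p * (m : ℤ) ^ (k - 1) * ∑ a ∈ Ico 1 p, (a : ℤ) ^ (k - 1) * ((a * m / p : ℕ) : ℤ)
        + (p : ℤ) ^ 2 * t := by
  obtain ⟨K, rfl⟩ : ∃ K, k = K + 1 := ⟨k - 1, by omega⟩
  have key : ∀ a : ℕ, ∃ ta : ℤ, ((a * m % p : ℕ) : ℤ) ^ (K + 1)
      = (a : ℤ) ^ (K + 1) * (m : ℤ) ^ (K + 1)
        - ((K : ℤ) + 1) * p * ((a : ℤ) ^ K * (m : ℤ) ^ K * ((a * m / p : ℕ) : ℤ))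
        + (p : ℤ) ^ 2 * ta := by
    intro a
    have hb : ((a * m % p : ℕ) : ℤ) = (a : ℤ) * m + (p : ℤ) * (-((a * m / p : ℕ) : ℤ)) := by
      have h := Nat.div_add_mod (a * m) p
      have h2 : ((p * (a * m / p) + a * m % p : ℕ) : ℤ) = ((a * m : ℕ) : ℤ) := Nat.cast_inj.mpr h
      rw [Nat.cast_add, Nat.cast_mul, Nat.cast_mul] at h2
      linear_combination h2
    obtain ⟨ta, hta⟩ := pow_expand (p : ℤ) ((a : ℤ) * m) (-((a * m / p : ℕ) : ℤ)) K
    refine ⟨ta, ?_⟩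
    rw [hb, hta]
    ring
  choose t ht using key
  refine ⟨∑ a ∈ Ico 1 p, t a, ?_⟩
  rw [Finset.mul_sum, Finset.mul_sum, Finset.mul_sum, ← Finset.sum_sub_distrib,
    ← Finset.sum_add_distrib]
  apply Finset.sum_congr rfl
  intro a _
  rw [ht a]
  simp only [Nat.add_sub_cancel, Nat.cast_add, Nat.cast_one]
  ring

lemma good_inner {p : ℕ} [Fact p.Prime] (n : ℕ) (hn : ¬ p ∣ n) :
    Good p (∑ i ∈ Finset.Ico 1 n, (if i % p = n % p then 1 / (i : ℚ) else 0))
      (((n / p : ℕ) : ZMod p) * ((n : ZMod p))⁻¹) := by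
  have hp1 : 1 < p := (Fact.out : p.Prime).one_lt
  have hnp : n % p ≠ 0 := fun h => hn (Nat.dvd_of_mod_eq_zero h)
  have h1 : Good p (∑ i ∈ Finset.Ico 1 n, (if i % p = n % p then 1 / (i : ℚ) else 0))
      (∑ i ∈ Finset.Ico 1 n, (if i % p = n % p then ((n : ZMod p))⁻¹ else 0)) := by
    apply Good.sum
    intro i _
    split_ifs with h
    · have hi0 : (i : ZMod p) ≠ 0 := by
        intro hc
        have hd : p ∣ i := (ZMod.natCast_eq_zero_iff i p).1 hc
        have hz : i % p = 0 := Nat.mod_eq_zero_of_dvd hd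
        rw [h] at hz
        exact hnp hz
      have hcast : (i : ZMod p) = (n : ZMod p) := by
        rw [← ZMod.natCast_mod i p, ← ZMod.natCast_mod n p, h]
      have := Good.inv_nat (p := p) i hi0
      rwa [hcast] at this
    · exact Good.zero
  have h2 : (∑ i ∈ Finset.Ico 1 n, (if i % p = n % p then ((n : ZMod p))⁻¹ else 0))
      = ((n / p : ℕ) : ZMod p) * ((n : ZMod p))⁻¹ := by
    rw [← Finset.sum_filter, Finset.sum_const, card_res p n (by omega) hnp, nsmul_eq_mul]
  rwa [h2] at h1

theorem T_p_congr (p m : ℕ) (hp : p.Prime) (hp2 : p ≠ 2) (hm : 1 ≤ m)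
    (hmp : Nat.Coprime m p) :
    ratCong p (T p m p) ((((m : ℚ) ^ 3 - m) / (3 * m)) * bernoulli (p - 3)) := by
  haveI : Fact p.Prime := ⟨hp⟩
  have hp1 : 1 < p := hp.one_lt
  have hpm : ¬ p ∣ m := (hp.coprime_iff_not_dvd).1 hmp.symm
  have hm0 : (m : ZMod p) ≠ 0 := fun h => hpm ((ZMod.natCast_eq_zero_iff m p).1 h)
  -- Good value of T
  set V : ZMod p := ∑ a ∈ Finset.Ico 1 p,
    ((a : ZMod p) ^ 2)⁻¹ * (((a * m / p : ℕ) : ZMod p) * (((a * m : ℕ) : ZMod p))⁻¹) with hV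
  have hGoodT : Good p (T p m p) V := by
    rw [T]
    apply Good.sum
    intro a ha
    rw [Finset.mem_Ico] at ha
    have hpa : ¬ p ∣ a := fun h => by have := Nat.le_of_dvd (by omega) h; omega
    have ha0 : (a : ZMod p) ≠ 0 := fun h => hpa ((ZMod.natCast_eq_zero_iff a p).1 h)
    have hpam : ¬ p ∣ a * m := fun h => by
      rcases (hp.dvd_mul).1 h with h' | h'
      · exact hpa h'
      · exact hpm h'
    rw [if_pos (Nat.Coprime.symm ((hp.coprime_iff_not_dvd).2 hpa))]
    exact (Good.inv_pow_nat a 2 ha0).mul (good_inner (a * m) hpam)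
  rcases eq_or_ne p 3 with hp3 | hp3
  · -- p = 3
    subst hp3
    have hm3 : m % 3 = 1 ∨ m % 3 = 2 := by
      have : m % 3 ≠ 0 := fun h => hpm (Nat.dvd_of_mod_eq_zero h)
      omega
    have hb0 : bernoulli (3 - 3) = 1 := by norm_num [bernoulli_zero]
    have key : ∀ c : ℕ, (m : ℚ) ^ 2 = 3 * c + 1 → V = (c : ZMod 3) →
        ratCong 3 (T 3 m 3) ((((m : ℚ) ^ 3 - m) / (3 * m)) * bernoulli (3 - 3)) := by
      intro c hc hVc
      have hm0' : (m : ℚ) ≠ 0 := by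
        intro h; exact absurd (by exact_mod_cast h : m = 0) (by omega)
      have hRHS : (((m : ℚ) ^ 3 - m) / (3 * m)) * bernoulli (3 - 3) = (c : ℚ) := by
        rw [hb0, mul_one]
        field_simp
        linear_combination hc
      have hGoodR : Good 3 ((((m : ℚ) ^ 3 - m) / (3 * m)) * bernoulli (3 - 3)) (c : ZMod 3) := by
        rw [hRHS]; exact Good.natCast c
      have hdiff := hGoodT.sub hGoodR
      have h0 : V - (c : ZMod 3) = 0 := by rw [hVc]; ring
      rw [h0] at hdiff
      exact ratCong_of_good hp hdiff
    have hIco : ∀ f : ℕ → ZMod 3, ∑ a ∈ Finset.Ico 1 3, f a = f 1 + f 2 := by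
      intro f
      have hset : Finset.Ico 1 3 = {1, 2} := by decide
      rw [hset, Finset.sum_insert (by decide), Finset.sum_singleton]
    set t := m / 3 with ht
    rcases hm3 with hr | hr
    · have hmeq : m = 3 * t + 1 := by omega
      have hq1 : 1 * m / 3 = t := by omega
      have hq2 : 2 * m / 3 = 2 * t := by omega
      refine key (3 * t ^ 2 + 2 * t) ?_ ?_
      · have : m ^ 2 = 3 * (3 * t ^ 2 + 2 * t) + 1 := by rw [hmeq]; ring
        exact_mod_cast congrArg (Nat.cast : ℕ → ℚ) this
      · have h3z : (3 : ZMod 3) = 0 := by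
          have hz := ZMod.natCast_self 3
          push_cast at hz
          exact hz
        have e1 : ((1 * m : ℕ) : ZMod 3) = 1 := by
          rw [← ZMod.natCast_mod (1 * m) 3, (by omega : (1 * m) % 3 = 1), Nat.cast_one]
        have e2 : ((2 * m : ℕ) : ZMod 3) = 2 := by
          rw [← ZMod.natCast_mod (2 * m) 3, (by omega : (2 * m) % 3 = 2), Nat.cast_ofNat]
        have c1 : ((((1 : ℕ) : ZMod 3)) ^ 2)⁻¹ = 1 := by norm_num
        have c2 : ((((2 : ℕ) : ZMod 3)) ^ 2)⁻¹ = 1 := by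
          have h : (((2 : ℕ) : ZMod 3)) ^ 2 = 1 := by push_cast; linear_combination h3z
          rw [h, inv_one]
        have i2 : (2 : ZMod 3)⁻¹ = 2 := by
          have h : (2 : ZMod 3) * 2 = 1 := by linear_combination h3z
          exact (eq_inv_of_mul_eq_one_right h).symm
        rw [hV, hIco, hq1, hq2, e1, e2, c1, c2, i2, inv_one]
        push_cast
        linear_combination ((t : ZMod 3) - (t : ZMod 3) ^ 2) * h3z
    · have hmeq : m = 3 * t + 2 := by omega
      have hq1 : 1 * m / 3 = t := by omega
      have hq2 : 2 * m / 3 = 2 * t + 1 := by omega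
      refine key (3 * t ^ 2 + 4 * t + 1) ?_ ?_
      · have : m ^ 2 = 3 * (3 * t ^ 2 + 4 * t + 1) + 1 := by rw [hmeq]; ring
        exact_mod_cast congrArg (Nat.cast : ℕ → ℚ) this
      · have h3z : (3 : ZMod 3) = 0 := by
          have hz := ZMod.natCast_self 3
          push_cast at hz
          exact hz
        have e1 : ((1 * m : ℕ) : ZMod 3) = 2 := by
          rw [← ZMod.natCast_mod (1 * m) 3, (by omega : (1 * m) % 3 = 2), Nat.cast_ofNat]
        have e2 : ((2 * m : ℕ) : ZMod 3) = 1 := by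
          rw [← ZMod.natCast_mod (2 * m) 3, (by omega : (2 * m) % 3 = 1), Nat.cast_one]
        have c1 : ((((1 : ℕ) : ZMod 3)) ^ 2)⁻¹ = 1 := by norm_num
        have c2 : ((((2 : ℕ) : ZMod 3)) ^ 2)⁻¹ = 1 := by
          have h : (((2 : ℕ) : ZMod 3)) ^ 2 = 1 := by push_cast; linear_combination h3z
          rw [h, inv_one]
        have i2 : (2 : ZMod 3)⁻¹ = 2 := by
          have h : (2 : ZMod 3) * 2 = 1 := by linear_combination h3z
          exact (eq_inv_of_mul_eq_one_right h).symm
        rw [hV, hIco, hq1, hq2, e1, e2, c1, c2, i2, inv_one]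
        push_cast
        linear_combination (-((t : ZMod 3) ^ 2)) * h3z
  · -- p ≥ 5
    have hp4 : p ≠ 4 := by intro h; rw [h] at hp; norm_num at hp
    have hp5 : 5 ≤ p := by omega
    obtain ⟨r, hrPI, hFaul⟩ := faulhaber (p := p) hp5
    obtain ⟨ur, hur⟩ := hrPI
    obtain ⟨β, hβ⟩ := pint_bernoulli (p := p) (p - 3) (by omega)
    set k := p - 3 with hk
    have hk2 : 2 ≤ k := by omega
    have hbe : ∑ a ∈ Finset.Ico 1 p, ((a * m % p : ℕ) : ℤ) ^ k
        = ∑ a ∈ Finset.Ico 1 p, ((a : ℕ) : ℤ) ^ k := by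
      exact_mod_cast sum_b_eq hp hmp k
    obtain ⟨tz, hbp⟩ := sum_b_pow p m k (by omega)
    rw [hbe] at hbp
    have hQ := congrArg (Int.cast : ℤ → ℚ) hbp
    push_cast [-Int.natCast_div, -Int.natCast_ediv] at hQ
    have hp0 : (p : ℚ) ≠ 0 := Nat.cast_ne_zero.mpr (by omega)
    have E' : (k : ℚ) * (m : ℚ) ^ (k - 1)
          * (∑ a ∈ Finset.Ico 1 p, (a : ℚ) ^ (k - 1) * ((a * m / p : ℕ) : ℚ))
        = ((m : ℚ) ^ k - 1) * bernoulli k + p * (((m : ℚ) ^ k - 1) * r + tz) := by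
      apply mul_left_cancel₀ hp0
      linear_combination hQ + ((m : ℚ) ^ k - 1) * hFaul
    have hL : Good p ((k : ℚ) * (m : ℚ) ^ (k - 1)
          * (∑ a ∈ Finset.Ico 1 p, (a : ℚ) ^ (k - 1) * ((a * m / p : ℕ) : ℚ)))
        ((k : ZMod p) * (m : ZMod p) ^ (k - 1)
          * (∑ a ∈ Finset.Ico 1 p, (a : ZMod p) ^ (k - 1) * ((a * m / p : ℕ) : ZMod p))) :=
      ((Good.natCast k).mul (Good.pow_nat m (k - 1))).mul
        (Good.sum fun a _ => (Good.pow_nat a (k - 1)).mul (Good.natCast _))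
    have hR : Good p (((m : ℚ) ^ k - 1) * bernoulli k + p * (((m : ℚ) ^ k - 1) * r + tz))
        (((m : ZMod p) ^ k - 1) * β + 0) :=
      (((Good.pow_nat m k).sub Good.one).mul hβ).add
        (Good.p_mul ((((Good.pow_nat m k).sub Good.one).mul hur).add (Good.intCast tz)))
    rw [E'] at hL
    have ZE := Good.unique hL hR
    -- ZMod p facts
    have h3 : ((3 : ℕ) : ZMod p) ≠ 0 := natCast_ne_zero_of_lt (by omega) (by omega)
    have h3' : (3 : ZMod p) ≠ 0 := by
      have : ((3 : ℕ) : ZMod p) = (3 : ZMod p) := by push_cast; ring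
      rwa [this] at h3
    have h3m : ((3 * m : ℕ) : ZMod p) ≠ 0 := by
      push_cast
      exact mul_ne_zero h3' hm0
    have hkbar : ((k : ℕ) : ZMod p) = -3 := by
      rw [hk, Nat.cast_sub (by omega : 3 ≤ p), ZMod.natCast_self]
      push_cast
      ring
    have hmk : (m : ZMod p) ^ k = ((m : ZMod p) ^ 2)⁻¹ := by
      have h1 : (m : ZMod p) ^ 2 * (m : ZMod p) ^ k = 1 := by
        rw [← pow_add, show 2 + k = p - 1 from by omega]
        exact ZMod.pow_card_sub_one_eq_one hm0

      exact eq_inv_of_mul_eq_one_right h1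
    have hmk1 : (m : ZMod p) ^ (k - 1) = ((m : ZMod p) ^ 3)⁻¹ := by
      have h1 : (m : ZMod p) ^ 3 * (m : ZMod p) ^ (k - 1) = 1 := by
        rw [← pow_add, show 3 + (k - 1) = p - 1 from by omega]
        exact ZMod.pow_card_sub_one_eq_one hm0

      exact eq_inv_of_mul_eq_one_right h1
    have hpowa : ∀ a ∈ Finset.Ico 1 p, (a : ZMod p) ^ (k - 1) = ((a : ZMod p) ^ 3)⁻¹ := by
      intro a ha
      rw [Finset.mem_Ico] at ha
      have hpa : ¬ p ∣ a := fun h => by have := Nat.le_of_dvd (by omega) h; omega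
      have ha0 : (a : ZMod p) ≠ 0 := fun h => hpa ((ZMod.natCast_eq_zero_iff a p).1 h)
      have h1 : (a : ZMod p) ^ 3 * (a : ZMod p) ^ (k - 1) = 1 := by
        rw [← pow_add, show 3 + (k - 1) = p - 1 from by omega]
        exact ZMod.pow_card_sub_one_eq_one ha0

      exact eq_inv_of_mul_eq_one_right h1
    set SIG : ZMod p := ∑ a ∈ Finset.Ico 1 p, (a : ZMod p) ^ (k - 1) * ((a * m / p : ℕ) : ZMod p) with hSIG
    have hVSIG : V = ((m : ZMod p))⁻¹ * SIG := by
      rw [hV, hSIG, Finset.mul_sum]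
      apply Finset.sum_congr rfl
      intro a ha
      have hmem := ha
      rw [Finset.mem_Ico] at hmem
      have hpa : ¬ p ∣ a := fun h => by have := Nat.le_of_dvd (by omega) h; omega
      have ha0 : (a : ZMod p) ≠ 0 := fun h => hpa ((ZMod.natCast_eq_zero_iff a p).1 h)
      rw [hpowa a ha, Nat.cast_mul, mul_inv]
      have hinv : ((a : ZMod p) ^ 2)⁻¹ * ((a : ZMod p))⁻¹ = ((a : ZMod p) ^ 3)⁻¹ := by
        rw [← mul_inv, ← pow_succ]
      linear_combination (((a * m / p : ℕ) : ZMod p) * ((m : ZMod p))⁻¹) * hinv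
    -- rewrite ZE
    rw [hkbar, hmk1, hmk, add_zero] at ZE
    -- ZE : -3 * ((m:ZMod p)^3)⁻¹ * SIG = (((m:ZMod p)^2)⁻¹ - 1) * β
    have hVW : V = ((m : ZMod p) ^ 3 - (m : ZMod p)) * (((3 * m : ℕ) : ZMod p))⁻¹ * β := by
      rw [hVSIG]
      have hMcast : ((3 * m : ℕ) : ZMod p) = 3 * (m : ZMod p) := by push_cast; ring
      rw [hMcast]
      field_simp at ZE
      have h2 : ((m : ZMod p) ^ 2) * (SIG * 3) = ((m : ZMod p) ^ 2) * (((m : ZMod p) ^ 3 - m) * β) := by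
        linear_combination (-((m : ZMod p) ^ 2)) * ZE
      have h3'' : SIG * 3 = ((m : ZMod p) ^ 3 - m) * β := mul_left_cancel₀ (pow_ne_zero 2 hm0) h2
      field_simp
      linear_combination h3''
    have hRHSeq : (((m : ℚ) ^ 3 - m) / (3 * m)) * bernoulli k
        = ((m : ℚ) ^ 3 - (m : ℚ)) * (1 / ((3 * m : ℕ) : ℚ)) * bernoulli k := by
      push_cast; ring
    have hGoodR : Good p ((((m : ℚ) ^ 3 - m) / (3 * m)) * bernoulli k)
        (((m : ZMod p) ^ 3 - (m : ZMod p)) * (((3 * m : ℕ) : ZMod p))⁻¹ * β) := by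
      rw [hRHSeq]
      exact (((Good.pow_nat m 3).sub (Good.natCast m)).mul (Good.inv_nat _ h3m)).mul hβ
    have hdiff := hGoodT.sub hGoodR
    have h0 : V - ((m : ZMod p) ^ 3 - (m : ZMod p)) * (((3 * m : ℕ) : ZMod p))⁻¹ * β = 0 := by
      rw [hVW]; ring
    rw [h0] at hdiff
    exact ratCong_of_good hp hdiff
end

section
/- There are no distinct odd primes p and q such that p ≡ 2 (mod q) and q³ ≡ 1 (mod p). -/
theorem no_p2_q3_pair :
    ¬ ∃ p q : ℕ, p.Prime ∧ q.Prime ∧ p ≠ 2 ∧ q ≠ 2 ∧ p ≠ q ∧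
      p ≡ 2 [MOD q] ∧ q ^ 3 ≡ 1 [MOD p] := by
  rintro ⟨p, q, hp, hq, hp2, hq2, hpq, h1, h2⟩
  -- move to integers
  have hP3 : 3 ≤ (p : ℤ) := by exact_mod_cast (hp.two_le.lt_of_ne (Ne.symm hp2))
  have hQ3 : 3 ≤ (q : ℤ) := by exact_mod_cast (hq.two_le.lt_of_ne (Ne.symm hq2))
  set P : ℤ := (p : ℤ) with hPdef
  set Q : ℤ := (q : ℤ) with hQdef
  have hd1 : Q ∣ P - 2 := by
    have := h1.dvd
    simpa using (dvd_neg.mpr this)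
  have hd2 : P ∣ Q ^ 3 - 1 := by
    have := h2.dvd
    simpa [hPdef, hQdef] using (dvd_neg.mpr this)
  have hPQ2 : Q ≤ P - 2 := by
    refine Int.le_of_dvd ?_ hd1
    omega
  have hPprime : Prime P := Nat.prime_iff_prime_int.mp hp
  have hfac : Q ^ 3 - 1 = (Q - 1) * (Q ^ 2 + Q + 1) := by ring
  rw [hfac] at hd2
  rcases hPprime.2.2 _ _ hd2 with h | h
  · have : P ≤ Q - 1 := Int.le_of_dvd (by omega) h
    omega
  · obtain ⟨k, hk⟩ := h
    have hk0 : 0 < k := by nlinarith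
    have hkQ : k < Q := by nlinarith
    -- Q ∣ 2k - 1
    have hdk : Q ∣ 2 * k - 1 := by
      have h3 : Q ∣ (P - 2) * k := hd1.mul_right k
      have h4 : Q ∣ Q * (Q + 1) := Dvd.intro _ rfl
      have heq : 2 * k - 1 = Q * (Q + 1) - (P - 2) * k := by linear_combination -hk
      rw [heq]; exact dvd_sub h4 h3
    have hkeq : 2 * k - 1 = Q := by
      rcases hdk with ⟨c, hc⟩
      have hc1 : 0 < c := by nlinarith
      have hc2 : c < 2 := by nlinarith
      have hce : c = 1 := by omega
      rw [hce, mul_one] at hc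
      omega
    -- Now P * (Q + 1) = 2Q(Q+1) + 2, so Q + 1 ∣ 2
    have hdiv : (Q + 1) ∣ 2 := ⟨P - 2 * Q, by nlinarith⟩
    have := Int.le_of_dvd (by norm_num) hdiv
    omega
end

section
/- Let p be an odd prime and r, m positive integers. Then ∑_{i+j+k = m p^r, i,j,k ∈ P_p} 1/(ijk) ≡ m·Z(p^r) (mod p^r), where the sum is over ordered triples of positive integers i, j, k coprime to p with i + j + k = m p^r, as a congruence of rational numbers whose denominators are coprime to p. -/
open Finset

/-- `Z n = ∑_{i+j+k=n, i,j,k coprime to n} 1/(ijk)` over ordered triples of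
positive integers. -/
def Z (n : ℕ) : ℚ :=
  ∑ i ∈ Finset.Icc 1 n, ∑ j ∈ Finset.Icc 1 n, ∑ k ∈ Finset.Icc 1 n,
    if i + j + k = n ∧ Nat.Coprime i n ∧ Nat.Coprime j n ∧ Nat.Coprime k n then
      1 / ((i : ℚ) * j * k)
    else 0

/-- `Zp n p = ∑_{i+j+k=n, i,j,k coprime to p} 1/(ijk)` over ordered triples of
positive integers coprime to `p`. -/
def Zp (n p : ℕ) : ℚ :=
  ∑ i ∈ Finset.Icc 1 n, ∑ j ∈ Finset.Icc 1 n, ∑ k ∈ Finset.Icc 1 n,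
    if i + j + k = n ∧ Nat.Coprime i p ∧ Nat.Coprime j p ∧ Nat.Coprime k p then
      1 / ((i : ℚ) * j * k)
    else 0

/-! ### Auxiliary congruence machinery -/

/-- `x ≡ 0 (mod N)` in the localization of `ℤ` away from `N`. -/
def RC (N : ℕ) (x : ℚ) : Prop := ∃ a b : ℤ, IsCoprime b (N : ℤ) ∧ x * b = N * a

lemma RC_zero (N : ℕ) : RC N 0 := ⟨0, 1, isCoprime_one_left, by ring⟩

lemma RC_add {N : ℕ} {x y : ℚ} (hx : RC N x) (hy : RC N y) : RC N (x + y) := by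
  obtain ⟨a1, b1, hb1, h1⟩ := hx
  obtain ⟨a2, b2, hb2, h2⟩ := hy
  refine ⟨a1 * b2 + a2 * b1, b1 * b2, hb1.mul_left hb2, ?_⟩
  push_cast
  linear_combination (b2 : ℚ) * h1 + (b1 : ℚ) * h2

lemma RC_sum {ι : Type*} {N : ℕ} (s : Finset ι) (f : ι → ℚ) (h : ∀ i ∈ s, RC N (f i)) :
    RC N (∑ i ∈ s, f i) := by
  classical
  induction s using Finset.induction_on with
  | empty => simpa using RC_zero N
  | insert _ _ hx ih =>
    rw [Finset.sum_insert hx]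
    exact RC_add (h _ (Finset.mem_insert_self _ _))
      (ih fun i hi => h i (Finset.mem_insert_of_mem hi))

lemma RC_natmul {N : ℕ} (n : ℕ) {x : ℚ} (hx : RC N x) : RC N ((n : ℚ) * x) := by
  obtain ⟨a, b, hb, h⟩ := hx
  refine ⟨n * a, b, hb, ?_⟩
  push_cast
  linear_combination (n : ℚ) * h

lemma RC_ratCong {N : ℕ} (hN : 2 ≤ N) {z : ℚ} (h : RC N z) :
    Nat.Coprime z.den N ∧ (N : ℤ) ∣ z.num := by
  obtain ⟨a, b, hb, hxb⟩ := h
  have hbne : b ≠ 0 := by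
    rintro rfl
    have : IsUnit ((N : ℤ)) := isCoprime_zero_left.mp hb
    rw [Int.isUnit_iff] at this
    omega
  have hbq : (b : ℚ) ≠ 0 := Int.cast_ne_zero.mpr hbne
  have hzeq : z = ((N * a : ℤ) : ℚ) / (b : ℚ) := by
    push_cast
    field_simp
    linear_combination hxb
  have hden : (z.den : ℤ) ∣ b := by
    rw [hzeq, ← Rat.divInt_eq_div]
    exact Rat.den_dvd _ _
  have hcopden : IsCoprime ((z.den : ℤ)) (N : ℤ) := hb.of_isCoprime_of_dvd_left hden
  constructor
  · exact Nat.isCoprime_iff_coprime.mp hcopden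
  · have hnum : z.num * b = (N : ℤ) * a * z.den := by
      have := hxb
      rw [← Rat.num_div_den z] at this
      field_simp at this
      have h' : z.num * b = ((z.den : ℤ) * N) * a := by exact_mod_cast this
      linear_combination h'
    have : (N : ℤ) ∣ z.num * b := ⟨a * z.den, by linarith [hnum]⟩
    exact IsCoprime.dvd_of_dvd_mul_right hb.symm this

lemma RC_one_div_sub {N : ℕ} {u v : ℤ} (hu : u ≠ 0) (hv : v ≠ 0)
    (hcu : IsCoprime u (N : ℤ)) (hcv : IsCoprime v (N : ℤ)) (hd : (N : ℤ) ∣ (v - u)) :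
    RC N (1 / (u : ℚ) - 1 / (v : ℚ)) := by
  obtain ⟨t, ht⟩ := hd
  refine ⟨t, u * v, hcu.mul_left hcv, ?_⟩
  have hu' : (u : ℚ) ≠ 0 := Int.cast_ne_zero.mpr hu
  have hv' : (v : ℚ) ≠ 0 := Int.cast_ne_zero.mpr hv
  have ht' : (v : ℚ) - u = (N : ℚ) * t := by
    exact_mod_cast congrArg (fun n : ℤ => (n : ℚ)) ht
  push_cast
  field_simp
  linear_combination ht'

lemma RC_one_div_add {N : ℕ} {u v : ℤ} (hu : u ≠ 0) (hv : v ≠ 0)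
    (hcu : IsCoprime u (N : ℤ)) (hcv : IsCoprime v (N : ℤ)) (hd : (N : ℤ) ∣ (v + u)) :
    RC N (1 / (u : ℚ) + 1 / (v : ℚ)) := by
  obtain ⟨t, ht⟩ := hd
  refine ⟨t, u * v, hcu.mul_left hcv, ?_⟩
  have hu' : (u : ℚ) ≠ 0 := Int.cast_ne_zero.mpr hu
  have hv' : (v : ℚ) ≠ 0 := Int.cast_ne_zero.mpr hv
  have ht' : (v : ℚ) + u = (N : ℚ) * t := by
    exact_mod_cast congrArg (fun n : ℤ => (n : ℚ)) ht
  push_cast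
  field_simp
  linear_combination ht'

/-! ### Sum manipulation lemmas -/

lemma sum_Icc_one {M : Type*} [AddCommMonoid M] (n : ℕ) (f : ℕ → M) :
    ∑ i ∈ Icc 1 n, f i = ∑ a ∈ range n, f (1 + a) := by
  rw [← Finset.Ico_add_one_right_eq_Icc, Finset.sum_Ico_eq_sum_range]
  simp

lemma sum_Icc_mul {M : Type*} [AddCommMonoid M] (m q : ℕ) (f : ℕ → M) :
    ∑ i ∈ Icc 1 (m * q), f i = ∑ x ∈ range m, ∑ a ∈ range q, f (1 + (x * q + a)) := by
  rw [sum_Icc_one]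
  induction m with
  | zero => simp
  | succ n ih =>
    rw [Nat.succ_mul, Finset.sum_range_add, ih, Finset.sum_range_succ]

lemma sum_reorder {M : Type*} [AddCommMonoid M] (s t : Finset ℕ)
    (f : ℕ → ℕ → ℕ → ℕ → ℕ → ℕ → M) :
    (∑ x ∈ s, ∑ a ∈ t, ∑ y ∈ s, ∑ b ∈ t, ∑ z ∈ s, ∑ c ∈ t, f x a y b z c)
      = ∑ a ∈ t, ∑ b ∈ t, ∑ c ∈ t, ∑ x ∈ s, ∑ y ∈ s, ∑ z ∈ s, f x a y b z c := by
  rw [Finset.sum_comm]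
  refine Finset.sum_congr rfl fun a _ => ?_
  rw [show (∑ x ∈ s, ∑ y ∈ s, ∑ b ∈ t, ∑ z ∈ s, ∑ c ∈ t, f x a y b z c)
      = ∑ x ∈ s, ∑ b ∈ t, ∑ y ∈ s, ∑ z ∈ s, ∑ c ∈ t, f x a y b z c from
    Finset.sum_congr rfl fun x _ => Finset.sum_comm]
  rw [Finset.sum_comm]
  refine Finset.sum_congr rfl fun b _ => ?_
  rw [show (∑ x ∈ s, ∑ y ∈ s, ∑ z ∈ s, ∑ c ∈ t, f x a y b z c)
      = ∑ x ∈ s, ∑ y ∈ s, ∑ c ∈ t, ∑ z ∈ s, f x a y b z c from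
    Finset.sum_congr rfl fun x _ => Finset.sum_congr rfl fun y _ => Finset.sum_comm]
  rw [show (∑ x ∈ s, ∑ y ∈ s, ∑ c ∈ t, ∑ z ∈ s, f x a y b z c)
      = ∑ x ∈ s, ∑ c ∈ t, ∑ y ∈ s, ∑ z ∈ s, f x a y b z c from
    Finset.sum_congr rfl fun x _ => Finset.sum_comm]
  rw [Finset.sum_comm]

/-! ### The building blocks of the proof -/

/-- The summand of `Zp`. -/
def Fi (p n : ℕ) (i j k : ℕ) : ℚ :=
  if i + j + k = n ∧ Nat.Coprime i p ∧ Nat.Coprime j p ∧ Nat.Coprime k p then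
    1 / ((i : ℚ) * j * k)
  else 0

/-- The reduced summand. -/
def Gt (p q mn : ℕ) (x a y b z c : ℕ) : ℚ :=
  (if (1+a)+(1+b)+(1+c)+(x+y+z)*q = mn then (1:ℚ) else 0) *
  (if Nat.Coprime (1+a) p ∧ Nat.Coprime (1+b) p ∧ Nat.Coprime (1+c) p then
      1 / (((1+a : ℕ) : ℚ) * ((1+b : ℕ) : ℚ) * ((1+c : ℕ) : ℚ))
    else 0)

/-- Number of triples in `[0,m)³` with `x+y+z+w = m`. -/
def cnt (m w : ℕ) : ℕ :=
  ∑ x ∈ range m, ∑ y ∈ range m, ∑ z ∈ range m, if x+y+z+w = m then 1 else 0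

/-- The summand of the reduced block sums. -/
def St (p w a b c : ℕ) : ℚ :=
  if (1+a)+(1+b)+(1+c) = w ∧ Nat.Coprime (1+a) p ∧ Nat.Coprime (1+b) p ∧ Nat.Coprime (1+c) p
  then 1 / (((1+a : ℕ) : ℚ) * ((1+b : ℕ) : ℚ) * ((1+c : ℕ) : ℚ)) else 0

lemma L1 (p m q : ℕ) :
    Zp (m * q) p = ∑ x ∈ range m, ∑ a ∈ range q, ∑ y ∈ range m, ∑ b ∈ range q,
      ∑ z ∈ range m, ∑ c ∈ range q,
        Fi p (m*q) (1+(x*q+a)) (1+(y*q+b)) (1+(z*q+c)) := by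
  rw [show Zp (m*q) p = ∑ i ∈ Icc 1 (m*q), ∑ j ∈ Icc 1 (m*q), ∑ k ∈ Icc 1 (m*q),
      Fi p (m*q) i j k from rfl]
  simp only [sum_Icc_mul]

lemma L2 (p r m q x a y b z c : ℕ) (hp : p.Prime) (hr : 1 ≤ r) (hq : q = p^r) :
    RC q (Fi p (m*q) (1+(x*q+a)) (1+(y*q+b)) (1+(z*q+c)) - Gt p q (m*q) x a y b z c) := by
  have hq' : q = p^(r-1) * p := by
    rw [hq, show r = (r-1)+1 by omega]; rw [pow_succ]; simp
  have hcs : ∀ w t : ℕ, Nat.Coprime (1+(t*q+w)) p ↔ Nat.Coprime (1+w) p := by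
    intro w t
    rw [show 1+(t*q+w) = (1+w) + (t * p^(r-1)) * p by rw [hq']; ring]
    exact Nat.coprime_add_mul_right_left _ _ _
  have he : (1+(x*q+a)) + (1+(y*q+b)) + (1+(z*q+c)) = (1+a)+(1+b)+(1+c)+(x+y+z)*q := by
    ring
  rw [Fi, Gt]
  by_cases hEQ : (1+a)+(1+b)+(1+c)+(x+y+z)*q = m*q
  · by_cases hC : Nat.Coprime (1+a) p ∧ Nat.Coprime (1+b) p ∧ Nat.Coprime (1+c) p
    · rw [if_pos ⟨by rw [he]; exact hEQ,
        (hcs a x).mpr hC.1, (hcs b y).mpr hC.2.1, (hcs c z).mpr hC.2.2⟩,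
        if_pos hEQ, if_pos hC, one_mul]
      have hcopq : ∀ w t : ℕ, Nat.Coprime (1+w) p → Nat.Coprime (1+(t*q+w)) q := by
        intro w t h
        have := Nat.Coprime.pow_right r ((hcs w t).mpr h)
        rwa [← hq] at this
      have hcopq' : ∀ w : ℕ, Nat.Coprime (1+w) p → Nat.Coprime (1+w) q := by
        intro w h
        have := Nat.Coprime.pow_right r h
        rwa [← hq] at this
      have key := RC_one_div_sub (N := q)
        (u := (((1+(x*q+a)) * (1+(y*q+b)) * (1+(z*q+c)) : ℕ) : ℤ))
        (v := (((1+a) * (1+b) * (1+c) : ℕ) : ℤ))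
        (Int.natCast_ne_zero.mpr (by positivity))
        (Int.natCast_ne_zero.mpr (by positivity))
        (Nat.isCoprime_iff_coprime.mpr
          (((hcopq a x hC.1).mul (hcopq b y hC.2.1)).mul (hcopq c z hC.2.2)))
        (Nat.isCoprime_iff_coprime.mpr
          (((hcopq' a hC.1).mul (hcopq' b hC.2.1)).mul (hcopq' c hC.2.2)))
        ⟨-((x:ℤ)*(1+b)*(1+c) + (1+a)*y*(1+c) + (1+a)*(1+b)*z
            + (q:ℤ)*((x:ℤ)*y*(1+c) + (x:ℤ)*(1+b)*z + (1+a)*(y*z))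
            + (q:ℤ)^2*(x*y*z)), by push_cast; ring⟩
      convert key using 2 <;> push_cast <;> ring
    · rw [if_neg (fun hcon => hC ⟨(hcs a x).mp hcon.2.1, (hcs b y).mp hcon.2.2.1,
        (hcs c z).mp hcon.2.2.2⟩), if_neg hC, mul_zero, sub_zero]
      exact RC_zero q
  · rw [if_neg (fun hcon => hEQ (he ▸ hcon.1)), if_neg hEQ, zero_mul, sub_zero]
    exact RC_zero q

lemma L3 (p r m q a b c : ℕ) (hp : p.Prime) (hr : 1 ≤ r) (hq : q = p^r)
    (ha : a < q) (hb : b < q) (hc : c < q) :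
    ∑ x ∈ range m, ∑ y ∈ range m, ∑ z ∈ range m, Gt p q (m*q) x a y b z c
      = (cnt m 1 : ℚ) * St p q a b c + (cnt m 2 : ℚ) * St p (2*q) a b c := by
  have hq0 : 0 < q := by rw [hq]; exact pow_pos hp.pos r
  have hpq : p ∣ q := by rw [hq]; exact dvd_pow_self p (by omega)
  unfold Gt St
  by_cases hC : Nat.Coprime (1+a) p ∧ Nat.Coprime (1+b) p ∧ Nat.Coprime (1+c) p
  · have hbound : ∀ w : ℕ, w < q → Nat.Coprime (1+w) p → 1+w < q := by
      intro w hw hcw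
      rcases Nat.lt_or_ge (1+w) q with h | h
      · exact h
      · exfalso
        have hEq : 1 + w = q := by omega
        have : ¬ p ∣ (1+w) := (hp.coprime_iff_not_dvd).mp (Nat.coprime_comm.mp hcw)
        exact this (hEq ▸ hpq)
    have hA := hbound a ha hC.1
    have hB := hbound b hb hC.2.1
    have hCc := hbound c hc hC.2.2
    have hrw : ∀ w : ℕ,
        (if ((1+a)+(1+b)+(1+c) = w ∧ Nat.Coprime (1+a) p ∧ Nat.Coprime (1+b) p
            ∧ Nat.Coprime (1+c) p)
          then 1 / (((1+a : ℕ) : ℚ) * ((1+b : ℕ) : ℚ) * ((1+c : ℕ) : ℚ)) else 0)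
        = if (1+a)+(1+b)+(1+c) = w
          then 1 / (((1+a : ℕ) : ℚ) * ((1+b : ℕ) : ℚ) * ((1+c : ℕ) : ℚ)) else 0 := by
      intro w; by_cases h : (1+a)+(1+b)+(1+c) = w <;> simp [h, hC]
    simp only [if_pos hC, hrw, ← Finset.sum_mul]
    by_cases h1 : (1+a)+(1+b)+(1+c) = q
    · have h2 : (1+a)+(1+b)+(1+c) ≠ 2*q := by omega
      rw [if_pos h1, if_neg h2, mul_zero, add_zero]
      congr 1
      have hiff : ∀ x y z : ℕ, ((1+a)+(1+b)+(1+c)+(x+y+z)*q = m*q) = (x+y+z+1 = m) := by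
        intro x y z
        refine propext ⟨fun h => ?_, fun h => ?_⟩
        · refine Nat.eq_of_mul_eq_mul_right hq0 ?_
          calc (x+y+z+1)*q = (1+a)+(1+b)+(1+c)+(x+y+z)*q := by rw [h1]; ring
            _ = m*q := h
        · rw [h1, ← h]; ring
      simp only [hiff]
      unfold cnt
      push_cast
      rfl
    · by_cases h2 : (1+a)+(1+b)+(1+c) = 2*q
      · rw [if_neg h1, if_pos h2, mul_zero, zero_add]
        congr 1
        have hiff : ∀ x y z : ℕ, ((1+a)+(1+b)+(1+c)+(x+y+z)*q = m*q) = (x+y+z+2 = m) := by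
          intro x y z
          refine propext ⟨fun h => ?_, fun h => ?_⟩
          · refine Nat.eq_of_mul_eq_mul_right hq0 ?_
            calc (x+y+z+2)*q = (1+a)+(1+b)+(1+c)+(x+y+z)*q := by rw [h2]; ring
              _ = m*q := h
          · rw [h2, ← h]; ring
        simp only [hiff]
        unfold cnt
        push_cast
        rfl
      · rw [if_neg h1, if_neg h2, mul_zero, mul_zero, add_zero]
        have hzero : ∀ x y z : ℕ,
            (if (1+a)+(1+b)+(1+c)+(x+y+z)*q = m*q then (1:ℚ) else 0) = 0 := by
          intro x y z
          rw [if_neg]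
          intro h
          set T := (1+a)+(1+b)+(1+c) with hT
          set s := x+y+z with hs
          have hT3 : 3 ≤ T := by omega
          have hTle : T ≤ 3*q - 3 := by omega
          have hslt : s < m := by
            by_contra hge
            push_neg at hge
            have h' : m*q ≤ s*q := Nat.mul_le_mul_right q hge
            have : T + s*q ≥ 3 + m*q := by omega
            omega
          have hd : (m - s)*q = T := by
            rw [Nat.sub_mul]
            omega
          have hd1 : 1 ≤ m - s := by
            rcases Nat.eq_zero_or_pos (m - s) with h0 | h0
            · rw [h0, zero_mul] at hd; omega
            · exact h0
          have hd3 : m - s < 3 := by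
            have hlt : (m - s) * q < 3 * q := by
              calc (m - s) * q = T := hd
                _ < 3 * q := by omega
            exact lt_of_mul_lt_mul_right hlt (Nat.zero_le q)
          have : m - s = 1 ∨ m - s = 2 := by omega
          rcases this with h' | h'
          · rw [h', one_mul] at hd; omega
          · rw [h', two_mul] at hd; omega
        simp only [hzero, Finset.sum_const_zero, zero_mul]
  · have hrw0 : ∀ w : ℕ,
        (if ((1+a)+(1+b)+(1+c) = w ∧ Nat.Coprime (1+a) p ∧ Nat.Coprime (1+b) p
            ∧ Nat.Coprime (1+c) p)
          then 1 / (((1+a : ℕ) : ℚ) * ((1+b : ℕ) : ℚ) * ((1+c : ℕ) : ℚ)) else 0) = 0 :=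
      fun w => if_neg (fun h => hC h.2)
    simp only [if_neg hC, hrw0, mul_zero, Finset.sum_const_zero, add_zero]

lemma L4 (p r q : ℕ) (hr : 1 ≤ r) (hq : q = p^r) :
    Z q = ∑ a ∈ range q, ∑ b ∈ range q, ∑ c ∈ range q, St p q a b c := by
  have hcop : ∀ i : ℕ, Nat.Coprime i q = Nat.Coprime i p := by
    intro i
    rw [hq]
    exact propext (Nat.coprime_pow_right_iff (by omega) i p)
  rw [Z]
  simp only [sum_Icc_one, hcop]
  rfl

lemma L5 (m : ℕ) (hm : 1 ≤ m) : cnt m 1 = cnt m 2 + m := by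
  obtain ⟨m', rfl⟩ : ∃ m', m = m'+1 := ⟨m-1, by omega⟩
  have hL : cnt (m'+1) 1 =
      (∑ x ∈ range m', ∑ y ∈ range (m'+1), ∑ z ∈ range (m'+1),
        if (x+1)+y+z+1 = m'+1 then 1 else 0)
      + (∑ y ∈ range (m'+1), ∑ z ∈ range (m'+1), if 0+y+z+1 = m'+1 then 1 else 0) := by
    rw [cnt, Finset.sum_range_succ']
  have h0 : (∑ y ∈ range (m'+1), ∑ z ∈ range (m'+1),
      if 0+y+z+1 = m'+1 then (1:ℕ) else 0) = m'+1 := by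
    have hinner : ∀ y ∈ range (m'+1),
        (∑ z ∈ range (m'+1), if 0+y+z+1 = m'+1 then (1:ℕ) else 0) = 1 := by
      intro y hy
      rw [mem_range] at hy
      have hcond : ∀ z : ℕ, (0+y+z+1 = m'+1) = (z = m'-y) := fun z => propext (by omega)
      simp only [hcond]
      rw [Finset.sum_ite_eq' (range (m'+1)) (m'-y) (fun _ => (1:ℕ))]
      rw [if_pos (mem_range.mpr (by omega))]
    rw [Finset.sum_congr rfl hinner]
    simp
  have h1 : ∀ x y z : ℕ, ((x+1)+y+z+1 = m'+1) = (x+y+z+2 = m'+1) :=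
    fun x y z => propext (by omega)
  have h2 : cnt (m'+1) 2 = ∑ x ∈ range m', ∑ y ∈ range (m'+1), ∑ z ∈ range (m'+1),
      if x+y+z+2 = m'+1 then (1:ℕ) else 0 := by
    rw [cnt, Finset.sum_range_succ]
    have hlast : (∑ y ∈ range (m'+1), ∑ z ∈ range (m'+1),
        if m'+y+z+2 = m'+1 then (1:ℕ) else 0) = 0 := by
      apply Finset.sum_eq_zero
      intro y _
      apply Finset.sum_eq_zero
      intro z _
      rw [if_neg]
      omega
    rw [hlast, add_zero]
  rw [hL, h0, h2]
  simp only [h1]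

lemma L6 (p r q : ℕ) (hp : p.Prime) (hr : 1 ≤ r) (hq : q = p^r) :
    RC q ((∑ a ∈ range q, ∑ b ∈ range q, ∑ c ∈ range q, St p q a b c)
        + (∑ a ∈ range q, ∑ b ∈ range q, ∑ c ∈ range q, St p (2*q) a b c)) := by
  have hq0 : 0 < q := by rw [hq]; exact pow_pos hp.pos r
  have hpq : p ∣ q := by rw [hq]; exact dvd_pow_self p (by omega)
  have hqp : ¬ Nat.Coprime (1+(q-1)) p := by
    rw [show 1+(q-1) = q by omega]
    intro h
    exact (hp.coprime_iff_not_dvd).mp (Nat.coprime_comm.mp h) hpq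
  have z1 : ∀ w b c : ℕ, St p w (q-1) b c = 0 := fun w b c => if_neg (fun h => hqp h.2.1)
  have z2 : ∀ w a c : ℕ, St p w a (q-1) c = 0 := fun w a c => if_neg (fun h => hqp h.2.2.1)
  have z3 : ∀ w a b : ℕ, St p w a b (q-1) = 0 := fun w a b => if_neg (fun h => hqp h.2.2.2)
  have hrange : range q = range ((q-1)+1) := by rw [Nat.sub_add_cancel hq0]
  have shrink : ∀ w : ℕ,
      (∑ a ∈ range q, ∑ b ∈ range q, ∑ c ∈ range q, St p w a b c)
        = ∑ a ∈ range (q-1), ∑ b ∈ range (q-1), ∑ c ∈ range (q-1), St p w a b c := by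
    intro w
    rw [hrange]
    simp only [Finset.sum_range_succ, z1, z2, z3, add_zero, Finset.sum_const_zero]
  have refl3 : (∑ a ∈ range (q-1), ∑ b ∈ range (q-1), ∑ c ∈ range (q-1), St p (2*q) a b c)
      = ∑ a ∈ range (q-1), ∑ b ∈ range (q-1), ∑ c ∈ range (q-1),
          St p (2*q) (q-1-1-a) (q-1-1-b) (q-1-1-c) := by
    rw [← Finset.sum_range_reflect
      (fun a => ∑ b ∈ range (q-1), ∑ c ∈ range (q-1), St p (2*q) a b c) (q-1)]
    refine Finset.sum_congr rfl fun a _ => ?_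
    rw [← Finset.sum_range_reflect
      (fun b => ∑ c ∈ range (q-1), St p (2*q) (q-1-1-a) b c) (q-1)]
    refine Finset.sum_congr rfl fun b _ => ?_
    rw [← Finset.sum_range_reflect (fun c => St p (2*q) (q-1-1-a) (q-1-1-b) c) (q-1)]
  rw [shrink, shrink, refl3]
  simp only [← Finset.sum_add_distrib]
  refine RC_sum _ _ fun a ha => RC_sum _ _ fun b hb => RC_sum _ _ fun c hc => ?_
  rw [mem_range] at ha hb hc
  have hra : 1+(q-1-1-a) = q - (1+a) := by omega
  have hrb : 1+(q-1-1-b) = q - (1+b) := by omega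
  have hrc : 1+(q-1-1-c) = q - (1+c) := by omega
  have hale : 1+a ≤ q := by omega
  have hble : 1+b ≤ q := by omega
  have hcle : 1+c ≤ q := by omega
  have hcref : ∀ A : ℕ, 1 ≤ A → A ≤ q → (Nat.Coprime (q - A) p ↔ Nat.Coprime A p) := by
    intro A h1 h2
    rw [Nat.coprime_comm, hp.coprime_iff_not_dvd,
        @Nat.coprime_comm A, hp.coprime_iff_not_dvd]
    constructor
    · intro h hA
      exact h (Nat.dvd_sub hpq hA)
    · intro h hQA
      have hdd := Nat.dvd_sub hpq hQA
      rw [Nat.sub_sub_self h2] at hdd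
      exact h hdd
  rw [St, St, hra, hrb, hrc]
  have hcond : ((q-(1+a))+(q-(1+b))+(q-(1+c)) = 2*q
        ∧ Nat.Coprime (q-(1+a)) p ∧ Nat.Coprime (q-(1+b)) p ∧ Nat.Coprime (q-(1+c)) p)
      = ((1+a)+(1+b)+(1+c) = q
        ∧ Nat.Coprime (1+a) p ∧ Nat.Coprime (1+b) p ∧ Nat.Coprime (1+c) p) := by
    refine propext (and_congr ?_ (and_congr ?_ (and_congr ?_ ?_)))
    · constructor <;> intro h <;> omega
    · exact hcref _ (by omega) hale
    · exact hcref _ (by omega) hble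
    · exact hcref _ (by omega) hcle
  simp only [hcond]
  by_cases h : (1+a)+(1+b)+(1+c) = q
      ∧ Nat.Coprime (1+a) p ∧ Nat.Coprime (1+b) p ∧ Nat.Coprime (1+c) p
  · rw [if_pos h, if_pos h]
    have hposa : 0 < q - (1+a) := by omega
    have hposb : 0 < q - (1+b) := by omega
    have hposc : 0 < q - (1+c) := by omega
    have hcq : ∀ A : ℕ, Nat.Coprime A p → Nat.Coprime A q := by
      intro A hA
      have := Nat.Coprime.pow_right r hA
      rwa [← hq] at this
    have hvpos : 0 < (q-(1+a))*(q-(1+b))*(q-(1+c)) :=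
      Nat.mul_pos (Nat.mul_pos hposa hposb) hposc
    have key := RC_one_div_add (N := q)
      (u := (((1+a)*(1+b)*(1+c) : ℕ) : ℤ))
      (v := (((q-(1+a))*(q-(1+b))*(q-(1+c)) : ℕ) : ℤ))
      (Int.natCast_ne_zero.mpr (by positivity))
      (Int.natCast_ne_zero.mpr hvpos.ne')
      (Nat.isCoprime_iff_coprime.mpr
        (((hcq _ h.2.1).mul (hcq _ h.2.2.1)).mul (hcq _ h.2.2.2)))
      (Nat.isCoprime_iff_coprime.mpr
        (((hcq _ ((hcref _ (by omega) hale).mpr h.2.1)).mul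
          (hcq _ ((hcref _ (by omega) hble).mpr h.2.2.1))).mul
          (hcq _ ((hcref _ (by omega) hcle).mpr h.2.2.2))))
      ⟨(q:ℤ)^2 - (q:ℤ)*((1+a:ℕ)+(1+b:ℕ)+(1+c:ℕ))
          + (((1+a:ℕ):ℤ)*((1+b:ℕ):ℤ)+((1+a:ℕ):ℤ)*((1+c:ℕ):ℤ)+((1+b:ℕ):ℤ)*((1+c:ℕ):ℤ)),
        by push_cast [Nat.cast_sub hale, Nat.cast_sub hble, Nat.cast_sub hcle]; ring⟩
    convert key using 2 <;>
      push_cast [Nat.cast_sub hale, Nat.cast_sub hble, Nat.cast_sub hcle] <;> ring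
  · rw [if_neg h, if_neg h, add_zero]
    exact RC_zero q

lemma main_RC (p r m : ℕ) (hp : p.Prime) (hr : 1 ≤ r) (hm : 1 ≤ m) :
    RC (p^r) (Zp (m * p^r) p - (m : ℚ) * Z (p^r)) := by
  obtain ⟨q, hq⟩ : ∃ q, q = p^r := ⟨_, rfl⟩
  rw [← hq]
  -- termwise congruence between the decomposed Zp and the reduced sum
  have hsub : RC q
      ((∑ x ∈ range m, ∑ a ∈ range q, ∑ y ∈ range m, ∑ b ∈ range q,
          ∑ z ∈ range m, ∑ c ∈ range q,
            Fi p (m*q) (1+(x*q+a)) (1+(y*q+b)) (1+(z*q+c)))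
        - ∑ x ∈ range m, ∑ a ∈ range q, ∑ y ∈ range m, ∑ b ∈ range q,
            ∑ z ∈ range m, ∑ c ∈ range q, Gt p q (m*q) x a y b z c) := by
    simp only [← Finset.sum_sub_distrib]
    refine RC_sum _ _ fun x _ => RC_sum _ _ fun a _ => RC_sum _ _ fun y _ =>
      RC_sum _ _ fun b _ => RC_sum _ _ fun z _ => RC_sum _ _ fun c _ => ?_
    exact L2 p r m q x a y b z c hp hr hq
  -- evaluate the reduced sum
  have hGval : (∑ x ∈ range m, ∑ a ∈ range q, ∑ y ∈ range m, ∑ b ∈ range q,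
        ∑ z ∈ range m, ∑ c ∈ range q, Gt p q (m*q) x a y b z c)
      = (cnt m 1 : ℚ) * (∑ a ∈ range q, ∑ b ∈ range q, ∑ c ∈ range q, St p q a b c)
        + (cnt m 2 : ℚ) * (∑ a ∈ range q, ∑ b ∈ range q, ∑ c ∈ range q, St p (2*q) a b c) := by
    rw [sum_reorder (range m) (range q) (fun x a y b z c => Gt p q (m*q) x a y b z c)]
    rw [Finset.sum_congr rfl fun a ha => Finset.sum_congr rfl fun b hb =>
      Finset.sum_congr rfl fun c hc =>
        L3 p r m q a b c hp hr hq (mem_range.mp ha) (mem_range.mp hb) (mem_range.mp hc)]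
    simp only [Finset.sum_add_distrib, ← Finset.mul_sum]
  have hZ := L4 p r q hr hq
  have hcnt : (cnt m 1 : ℚ) = (cnt m 2 : ℚ) + m := by exact_mod_cast L5 m hm
  have hfinal : Zp (m*q) p - (m : ℚ) * Z q
      = ((∑ x ∈ range m, ∑ a ∈ range q, ∑ y ∈ range m, ∑ b ∈ range q,
            ∑ z ∈ range m, ∑ c ∈ range q,
              Fi p (m*q) (1+(x*q+a)) (1+(y*q+b)) (1+(z*q+c)))
          - ∑ x ∈ range m, ∑ a ∈ range q, ∑ y ∈ range m, ∑ b ∈ range q,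
              ∑ z ∈ range m, ∑ c ∈ range q, Gt p q (m*q) x a y b z c)
        + (cnt m 2 : ℚ) *
          ((∑ a ∈ range q, ∑ b ∈ range q, ∑ c ∈ range q, St p q a b c)
            + (∑ a ∈ range q, ∑ b ∈ range q, ∑ c ∈ range q, St p (2*q) a b c)) := by
    rw [L1 p m q, hGval, hZ, hcnt]
    ring
  rw [hfinal]
  exact RC_add hsub (RC_natmul _ (L6 p r q hp hr hq))

theorem Zp_mul_congr (p r m : ℕ) (hp : p.Prime) (hp2 : p ≠ 2) (hr : 1 ≤ r) (hm : 1 ≤ m) :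
    ratCong (p ^ r) (Zp (m * p ^ r) p) ((m : ℚ) * Z (p ^ r)) := by
  have h2q : 2 ≤ p ^ r := by
    calc 2 ≤ p := hp.two_le
      _ ≤ p ^ r := Nat.le_self_pow (by omega) p
  exact RC_ratCong h2q (main_RC p r m hp hr hm)
end

section
/- Let p be an odd prime, l a positive integer, and s a positive integer. Consider H = ∑_{k=1, (k,p)=1}^{p^l - 1} 1/k^s. Then: (i) if s is odd, (p-1) | (s+1), and p ∤ s, then H ≡ 0 (mod p^{2l-1}); (ii) if s is odd and ((p-1) ∤ (s+1) or p | s), then H ≡ 0 (mod p^{2l}); (iii) if s is even and (p-1) | s, then H ≡ 0 (mod p^{l-1}); (iv) if s is even and (p-1) ∤ s, then H ≡ 0 (mod p^l). -/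
open Finset

/-- `H p l s` is the sum over positive integers `k < p ^ l` coprime to `p` of `1 / k ^ s`. -/
def H (p l s : ℕ) : ℚ :=
  ∑ k ∈ Finset.Ico 1 (p ^ l), (if Nat.Coprime k p then 1 / (k : ℚ) ^ s else 0)

def Iset (p m : ℕ) : Finset ℕ := (Finset.Ico 1 (p^m)).filter (fun k => Nat.Coprime k p)

lemma mem_Iset {p m k : ℕ} : k ∈ Iset p m ↔ (1 ≤ k ∧ k < p^m) ∧ Nat.Coprime k p := by
  simp [Iset, Finset.mem_filter, Finset.mem_Ico]


lemma binom_aux {R : Type*} [CommRing R] (x q : R) (s : ℕ) (hs : 1 ≤ s) :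
    ∃ t : R, (x - q)^s = x^s - s*q*x^(s-1) + q^2*t := by
  induction s with
  | zero => omega
  | succ n ih =>
    rcases Nat.eq_zero_or_pos n with h0 | h1
    · subst h0
      exact ⟨0, by simp⟩
    · obtain ⟨t, ht⟩ := ih h1
      obtain ⟨m, rfl⟩ : ∃ m, n = m + 1 := ⟨n - 1, by omega⟩
      refine ⟨x*t + (m+1)*x^m - q*t, ?_⟩
      simp only [Nat.add_sub_cancel] at ht ⊢
      rw [pow_succ, ht]
      push_cast
      ring

/-- integer power sum over the index set -/
def Asum (p m s : ℕ) : ℤ := ∑ k ∈ Iset p m, (k:ℤ)^s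

section
variable {p : ℕ} [hp : Fact p.Prime]

omit hp in
lemma coprime_pow_of_mem {m k : ℕ} (hk : k ∈ Iset p m) : Nat.Coprime k (p^m) :=
  Nat.Coprime.pow_right m (mem_Iset.1 hk).2

lemma sum_Iset_eq_sum_units {M : Type*} [AddCommMonoid M] {m : ℕ} (hm : 1 ≤ m)
    (f : ZMod (p^m) → M) :
    ∑ k ∈ Iset p m, f (k : ZMod (p^m)) = ∑ u : (ZMod (p^m))ˣ, f u := by
  have hpm : 1 < p^m := Nat.one_lt_pow (by omega) hp.out.one_lt
  haveI : NeZero (p^m) := ⟨by omega⟩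
  haveI : Fact (1 < p^m) := ⟨hpm⟩
  refine Finset.sum_bij' (fun k hk => (ZMod.unitOfCoprime k (coprime_pow_of_mem hk)))
    (fun u _ => ((u : ZMod (p^m)).val)) (fun k hk => Finset.mem_univ _) ?_ ?_ ?_ ?_
  · intro u _
    rw [mem_Iset]
    have hcop := ZMod.val_coe_unit_coprime u
    refine ⟨⟨?_, ZMod.val_lt _⟩, Nat.Coprime.coprime_dvd_right (dvd_pow_self p (by omega)) hcop⟩
    rcases Nat.eq_zero_or_pos ((u : ZMod (p^m)).val) with h0 | h1
    · exfalso
      have : ((u : ZMod (p^m))) = 0 := by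
        rw [← ZMod.natCast_zmod_val (u : ZMod (p^m)), h0, Nat.cast_zero]
      exact u.ne_zero this
    · exact h1
  · intro k hk
    simp only [ZMod.coe_unitOfCoprime]
    exact ZMod.val_natCast_of_lt (mem_Iset.1 hk).1.2
  · intro u _
    ext
    simp [ZMod.natCast_zmod_val]
  · intro k hk
    simp [ZMod.coe_unitOfCoprime]

/-- C2 : if `(p-1) ∤ s` then `p^m ∣ Asum p m s`. -/
lemma C2 {m s : ℕ} (hns : ¬ (p - 1) ∣ s) : (p:ℤ)^m ∣ Asum p m s := by
  rcases Nat.eq_zero_or_pos m with rfl | hm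
  · simp
  haveI : NeZero (p^m) := ⟨(Nat.pow_pos hp.out.pos).ne'⟩
  -- choose a generator of (ZMod p)ˣ
  obtain ⟨g, hg⟩ := IsCyclic.exists_generator (α := (ZMod p)ˣ)
  have horder : orderOf g = p - 1 := by
    rw [orderOf_eq_card_of_forall_mem_zpowers hg, Nat.card_eq_fintype_card, ZMod.card_units]
  have hgs : g ^ s ≠ 1 := by
    intro h
    exact hns (horder ▸ orderOf_dvd_of_pow_eq_one h)
  set c : ℕ := ((g : ZMod p)).val with hc
  have hcg : ((c : ℕ) : ZMod p) = (g : ZMod p) := ZMod.natCast_zmod_val _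
  have hc1 : 1 ≤ c := by
    rcases Nat.eq_zero_or_pos c with h0 | h1
    · exfalso
      apply g.ne_zero
      rw [← hcg, h0, Nat.cast_zero]
    · exact h1
  have hccop : Nat.Coprime c p := ZMod.val_coe_unit_coprime g
  set d : ℕ := c ^ s - 1 with hd
  have hcs1 : 1 ≤ c ^ s := Nat.one_le_pow _ _ (by omega)
  have hdp : ¬ p ∣ d := by
    intro hdvd
    have : ((d : ℕ) : ZMod p) = 0 := (ZMod.natCast_eq_zero_iff _ _).2 hdvd
    rw [hd, Nat.cast_sub hcs1, Nat.cast_pow, hcg, Nat.cast_one, sub_eq_zero] at this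
    apply hgs
    ext
    push_cast
    exact this
  have hdcop : Nat.Coprime d (p^m) :=
    Nat.Coprime.pow_right m ((Nat.Prime.coprime_iff_not_dvd hp.out).2 hdp).symm
  -- the sum over units
  set S : ZMod (p^m) := ∑ u : (ZMod (p^m))ˣ, ((u : ZMod (p^m)))^s with hS
  have hcu : Nat.Coprime c (p^m) := Nat.Coprime.pow_right m hccop
  have hstep : ((c : ZMod (p^m)))^s * S = S := by
    rw [hS, Finset.mul_sum]
    refine Fintype.sum_equiv (Equiv.mulLeft (ZMod.unitOfCoprime c hcu)) _ _ (fun u => ?_)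
    simp [Units.val_mul, mul_pow, ZMod.coe_unitOfCoprime]
  have hd0 : ((d:ℕ) : ZMod (p^m)) * S = 0 := by
    have hdc : ((d:ℕ):ZMod (p^m)) = (c:ZMod (p^m))^s - 1 := by
      rw [hd, Nat.cast_sub hcs1, Nat.cast_pow, Nat.cast_one]
    rw [hdc, sub_mul, one_mul, hstep, sub_self]
  have hS0 : S = 0 := by
    have hu : IsUnit ((d:ℕ) : ZMod (p^m)) := (ZMod.isUnit_iff_coprime d (p^m)).2 hdcop
    exact (IsUnit.mul_right_eq_zero hu).1 hd0
  have hcast : ((Asum p m s : ℤ) : ZMod (p^m)) = 0 := by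
    rw [Asum]
    push_cast
    rw [sum_Iset_eq_sum_units hm (fun x : ZMod (p^m) => x^s)]
    exact hS0
  have := (ZMod.intCast_zmod_eq_zero_iff_dvd _ _).1 hcast
  exact_mod_cast this

lemma Asucc {m s : ℕ} (hm : 1 ≤ m) :
    ((Asum p (m+1) s : ℤ) : ZMod (p^m)) = (p : ZMod (p^m)) * ((Asum p m s : ℤ) : ZMod (p^m)) := by
  have hp0 : 0 < p^m := Nat.pow_pos hp.out.pos
  have hpd : p ∣ p^m := dvd_pow_self p (by omega)
  have key : ∑ k ∈ Iset p (m+1), ((k:ℕ) : ZMod (p^m))^s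
      = ∑ x ∈ (Iset p m) ×ˢ (Finset.range p), ((x.1:ℕ) : ZMod (p^m))^s := by
    refine Finset.sum_nbij' (fun k => (k % p^m, k / p^m)) (fun x => x.1 + x.2 * p^m) ?_ ?_ ?_ ?_ ?_
    · intro k hk
      obtain ⟨⟨hk1, hk2⟩, hk3⟩ := mem_Iset.1 hk
      rw [Finset.mem_product]
      constructor
      · rw [mem_Iset]
        have hnd : ¬ p ∣ k % p^m := by
          rw [Nat.dvd_mod_iff hpd]
          exact (Nat.Prime.coprime_iff_not_dvd hp.out).1 hk3.symm
        have hne : k % p^m ≠ 0 := by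
          intro h0; exact hnd (h0 ▸ dvd_zero p)
        refine ⟨⟨Nat.one_le_iff_ne_zero.2 hne, Nat.mod_lt _ hp0⟩, ((Nat.Prime.coprime_iff_not_dvd hp.out).2 hnd).symm⟩
      · rw [Finset.mem_range]
        rw [Nat.div_lt_iff_lt_mul hp0]
        calc k < p^(m+1) := hk2
        _ = p * p^m := by ring
    · intro x hx
      rw [Finset.mem_product] at hx
      obtain ⟨⟨hr1, hr2⟩, hr3⟩ := mem_Iset.1 hx.1
      have hj := Finset.mem_range.1 hx.2
      rw [mem_Iset]
      refine ⟨⟨le_trans hr1 (Nat.le_add_right _ _), ?_⟩, ?_⟩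
      · calc x.1 + x.2 * p^m < p^m + x.2 * p^m := Nat.add_lt_add_right hr2 _
        _ = (x.2 + 1) * p^m := by ring
        _ ≤ p * p^m := by
            have : x.2 + 1 ≤ p := by omega
            exact Nat.mul_le_mul_right _ this
        _ = p^(m+1) := by ring
      · refine ((Nat.Prime.coprime_iff_not_dvd hp.out).2 ?_).symm
        intro hdvd
        have h2 : p ∣ x.2 * p^m := Dvd.dvd.mul_left hpd x.2
        have h1 : p ∣ x.1 := by
          have h3 := Nat.dvd_sub hdvd h2
          rwa [Nat.add_sub_cancel] at h3
        exact (Nat.Prime.coprime_iff_not_dvd hp.out).1 hr3.symm h1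
    · intro k _
      exact Nat.mod_add_div' k (p^m)
    · intro x hx
      rw [Finset.mem_product] at hx
      obtain ⟨⟨hr1, hr2⟩, _⟩ := mem_Iset.1 hx.1
      ext
      · simp [Nat.add_mul_mod_self_right, Nat.mod_eq_of_lt hr2]
      · simp [Nat.add_mul_div_right _ _ hp0, Nat.div_eq_of_lt hr2]
    · intro k _
      rw [← ZMod.natCast_mod k (p^m)]
  rw [Asum, Asum]
  push_cast
  rw [key, Finset.sum_product]
  simp only [Finset.sum_const, Finset.card_range, nsmul_eq_mul, Finset.mul_sum]

/-- C1 : `p^(m-1) ∣ Asum p m s` always. -/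
lemma C1 {s : ℕ} : ∀ m : ℕ, (p:ℤ)^(m-1) ∣ Asum p m s := by
  intro m
  induction m with
  | zero => simp
  | succ n ih =>
    rcases Nat.eq_zero_or_pos n with rfl | hn
    · simp
    have key := Asucc (p := p) (m := n) (s := s) hn
    have h1 : (p:ℤ)^n ∣ Asum p (n+1) s - p * Asum p n s := by
      have : ((Asum p (n+1) s - p * Asum p n s : ℤ) : ZMod (p^n)) = 0 := by
        push_cast
        push_cast at key
        rw [key]
        ring
      have := (ZMod.intCast_zmod_eq_zero_iff_dvd _ _).1 this
      exact_mod_cast this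
    have h2 : (p:ℤ)^n ∣ p * Asum p n s := by
      have he : (p:ℤ)^n = p * (p:ℤ)^(n-1) := by
        rw [← pow_succ']
        congr 1
        omega
      rw [he]
      exact mul_dvd_mul_left _ ih
    have := dvd_add h1 h2
    simpa using this

end

section Padic
variable {p : ℕ} [hp : Fact p.Prime]

noncomputable def pinv (p : ℕ) [Fact p.Prime] (k : ℕ) : ℤ_[p] :=
  if h : ‖((k : ℚ_[p]))⁻¹‖ ≤ 1 then ⟨_, h⟩ else 0

lemma norm_natCast_eq_one {k : ℕ} (hk : Nat.Coprime k p) : ‖(k : ℚ_[p])‖ = 1 := by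
  have hnd : ¬ (p:ℤ) ∣ (k:ℤ) := by
    rw [Int.natCast_dvd_natCast]
    exact (Nat.Prime.coprime_iff_not_dvd hp.out).1 hk.symm
  have h1 : ¬ ‖((k:ℤ) : ℚ_[p])‖ < 1 := fun h => hnd ((Padic.norm_intCast_lt_one_iff).1 h)
  have h2 : ‖((k:ℤ) : ℚ_[p])‖ ≤ 1 := Padic.norm_int_le_one _
  have h3 : ‖((k:ℤ) : ℚ_[p])‖ = 1 := le_antisymm h2 (not_lt.1 h1)
  rw [← h3]
  norm_cast

lemma coe_pinv {k : ℕ} (hk : Nat.Coprime k p) :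
    ((pinv p k : ℤ_[p]) : ℚ_[p]) = (k : ℚ_[p])⁻¹ := by
  have hP : ‖((k : ℚ_[p]))⁻¹‖ ≤ 1 := by
    rw [norm_inv, norm_natCast_eq_one hk]
    norm_num
  have e : pinv p k = ⟨(k : ℚ_[p])⁻¹, hP⟩ := dif_pos hP
  rw [e]

lemma pinv_mul {k : ℕ} (hk : Nat.Coprime k p) : pinv p k * (k : ℤ_[p]) = 1 := by
  have hk0 : (k : ℚ_[p]) ≠ 0 := by
    intro h
    have := norm_natCast_eq_one (p := p) hk
    rw [h, norm_zero] at this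
    norm_num at this
  apply Subtype.ext
  push_cast [coe_pinv hk]
  exact inv_mul_cancel₀ hk0

/-- the p-adic analogue of `H`. -/
noncomputable def Tsum (p : ℕ) [Fact p.Prime] (l s : ℕ) : ℤ_[p] :=
  ∑ k ∈ Iset p l, (pinv p k)^s

lemma Tsum_sub_Asum (l s : ℕ) (hl : 1 ≤ l) :
    (p:ℤ_[p])^l ∣ Tsum p l s - ((Asum p l s : ℤ) : ℤ_[p]) := by
  have hpl : 1 < p^l := Nat.one_lt_pow (by omega) hp.out.one_lt
  haveI : NeZero (p^l) := ⟨by omega⟩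
  haveI : Fact (1 < p^l) := ⟨hpl⟩
  set σ : ℕ → ℕ := fun k => ((k : ZMod (p^l))⁻¹).val with hσ
  -- basic facts about σ on Iset
  have hcast : ∀ k, ((σ k : ℕ) : ZMod (p^l)) = (k : ZMod (p^l))⁻¹ :=
    fun k => ZMod.natCast_zmod_val _
  have hmul : ∀ k ∈ Iset p l, (k : ZMod (p^l)) * ((σ k : ℕ) : ZMod (p^l)) = 1 := by
    intro k hk
    rw [hcast]
    exact ZMod.mul_inv_of_unit _ ((ZMod.isUnit_iff_coprime k _).2 (coprime_pow_of_mem hk))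
  have hσmem : ∀ k ∈ Iset p l, σ k ∈ Iset p l := by
    intro k hk
    have hu : IsUnit ((k : ZMod (p^l))) := (ZMod.isUnit_iff_coprime k _).2 (coprime_pow_of_mem hk)
    have hu2 : IsUnit ((k : ZMod (p^l))⁻¹) :=
      IsUnit.of_mul_eq_one _ (by rw [mul_comm]; exact ZMod.mul_inv_of_unit _ hu)
    have hcop : Nat.Coprime (σ k) (p^l) := by
      have h5 := ZMod.val_coe_unit_coprime hu2.unit
      rwa [hu2.unit_spec] at h5
    rw [mem_Iset]
    refine ⟨⟨?_, ZMod.val_lt _⟩, Nat.Coprime.coprime_dvd_right (dvd_pow_self p (by omega)) hcop⟩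
    rcases Nat.eq_zero_or_pos (σ k) with h0 | h1
    · exfalso
      have h6 := hmul k hk
      rw [h0, Nat.cast_zero, mul_zero] at h6
      exact zero_ne_one h6
    · exact h1
  have hσσ : ∀ k ∈ Iset p l, σ (σ k) = k := by
    intro k hk
    have hu : IsUnit ((k : ZMod (p^l))) := (ZMod.isUnit_iff_coprime k _).2 (coprime_pow_of_mem hk)
    have h7 : ((k : ZMod (p^l))⁻¹)⁻¹ = (k : ZMod (p^l)) := by
      have ha : (k : ZMod (p^l)) * (k : ZMod (p^l))⁻¹ = 1 := ZMod.mul_inv_of_unit _ hu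
      have hu2 : IsUnit ((k : ZMod (p^l))⁻¹) := IsUnit.of_mul_eq_one _ (by
        rw [mul_comm]; exact ha)
      have hb : (k : ZMod (p^l))⁻¹ * ((k : ZMod (p^l))⁻¹)⁻¹ = 1 := ZMod.mul_inv_of_unit _ hu2
      calc ((k : ZMod (p^l))⁻¹)⁻¹ = ((k : ZMod (p^l)) * (k : ZMod (p^l))⁻¹) * ((k : ZMod (p^l))⁻¹)⁻¹ := by
            rw [ha, one_mul]
      _ = (k : ZMod (p^l)) * ((k : ZMod (p^l))⁻¹ * ((k : ZMod (p^l))⁻¹)⁻¹) := by ring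
      _ = (k : ZMod (p^l)) := by rw [hb, mul_one]
    show ((((σ k : ℕ)) : ZMod (p^l))⁻¹).val = k
    rw [hcast, h7]
    exact ZMod.val_natCast_of_lt (mem_Iset.1 hk).1.2
  have hre : ∑ k ∈ Iset p l, ((σ k : ℕ) : ℤ_[p])^s = ∑ k ∈ Iset p l, ((k : ℕ) : ℤ_[p])^s :=
    Finset.sum_nbij' σ σ hσmem hσmem hσσ hσσ (fun k hk => rfl)
  have hsplit : Tsum p l s - ((Asum p l s : ℤ) : ℤ_[p])
      = ∑ k ∈ Iset p l, ((pinv p k)^s - ((σ k : ℕ) : ℤ_[p])^s) := by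
    rw [Finset.sum_sub_distrib, hre, Tsum, Asum]
    push_cast
    ring
  rw [hsplit]
  refine Finset.dvd_sum ?_
  intro k hk
  have hkp : Nat.Coprime k p := (mem_Iset.1 hk).2
  have hint : ((p:ℤ))^l ∣ ((k * σ k : ℕ) : ℤ) - 1 := by
    have h8 : (((k * σ k : ℕ) : ℤ) - 1 : ℤ) = ((((k * σ k : ℕ) : ℤ) - 1 : ℤ)) := rfl
    have h9 : ((((k * σ k : ℕ) : ℤ) - 1 : ℤ) : ZMod (p^l)) = 0 := by
      push_cast
      rw [hmul k hk]  -- might need cast juggling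
      ring
    have := (ZMod.intCast_zmod_eq_zero_iff_dvd _ _).1 h9
    exact_mod_cast this
  have hZ : (p:ℤ_[p])^l ∣ (1 - (k : ℤ_[p]) * ((σ k : ℕ) : ℤ_[p])) := by
    have h5 : (p:ℤ_[p])^l ∣ ((((k * σ k : ℕ) : ℤ) - 1 : ℤ) : ℤ_[p]) := by
      rw [show ((p:ℤ_[p]))^l = ((p:ℤ_[p]))^l from rfl]
      have := (PadicInt.pow_p_dvd_int_iff (p := p) l (((k * σ k : ℕ) : ℤ) - 1)).2 (by exact_mod_cast hint)
      exact this
    have h6 : ((((k * σ k : ℕ) : ℤ) - 1 : ℤ) : ℤ_[p]) = -(1 - (k : ℤ_[p]) * ((σ k : ℕ) : ℤ_[p])) := by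
      push_cast
      ring
    rw [h6] at h5
    exact (dvd_neg).1 h5
  have hdiff : pinv p k - ((σ k : ℕ) : ℤ_[p]) = pinv p k * (1 - (k : ℤ_[p]) * ((σ k : ℕ) : ℤ_[p])) := by
    rw [mul_sub, mul_one, ← mul_assoc, pinv_mul hkp, one_mul]
  have h10 : (p:ℤ_[p])^l ∣ pinv p k - ((σ k : ℕ) : ℤ_[p]) := by
    rw [hdiff]
    exact Dvd.dvd.mul_left hZ _
  exact dvd_trans h10 (sub_dvd_pow_sub_pow _ _ s)


lemma M2 (l s : ℕ) (hl : 1 ≤ l) : (p:ℤ_[p])^(l-1) ∣ Tsum p l s := by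
  have h1 := Tsum_sub_Asum (p := p) l s hl
  have h2 : (p:ℤ_[p])^(l-1) ∣ ((Asum p l s : ℤ) : ℤ_[p]) :=
    (PadicInt.pow_p_dvd_int_iff _ _).2 (by exact_mod_cast C1 (p := p) (s := s) l)
  have h3 : (p:ℤ_[p])^(l-1) ∣ Tsum p l s - ((Asum p l s : ℤ) : ℤ_[p]) :=
    dvd_trans (pow_dvd_pow _ (by omega)) h1
  simpa using dvd_add h3 h2

lemma M1 (l s : ℕ) (hl : 1 ≤ l) (hns : ¬ (p - 1) ∣ s) : (p:ℤ_[p])^l ∣ Tsum p l s := by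
  have h1 := Tsum_sub_Asum (p := p) l s hl
  have h2 : (p:ℤ_[p])^l ∣ ((Asum p l s : ℤ) : ℤ_[p]) :=
    (PadicInt.pow_p_dvd_int_iff _ _).2 (by exact_mod_cast C2 (p := p) (m := l) (s := s) hns)
  simpa using dvd_add h1 h2

lemma M3 (l s : ℕ) (hl : 1 ≤ l) (hs : 1 ≤ s) (hodd : Odd s) :
    (p:ℤ_[p])^(2*l) ∣ 2 * Tsum p l s + (s : ℤ_[p]) * (p:ℤ_[p])^l * Tsum p l (s+1) := by
  set q : ℤ_[p] := (p:ℤ_[p])^l with hq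
  set ρ : ℕ → ℕ := fun k => p^l - k with hρ
  have hρmem : ∀ k ∈ Iset p l, ρ k ∈ Iset p l := by
    intro k hk
    obtain ⟨⟨hk1, hk2⟩, hk3⟩ := mem_Iset.1 hk
    rw [mem_Iset]
    simp only [hρ]
    refine ⟨⟨by omega, by omega⟩, ?_⟩
    refine ((Nat.Prime.coprime_iff_not_dvd hp.out).2 ?_).symm
    intro hdvd
    have hpl : p ∣ p^l := dvd_pow_self p (by omega)
    have := Nat.dvd_sub hpl hdvd
    rw [show p^l - (p^l - k) = k by omega] at this
    exact (Nat.Prime.coprime_iff_not_dvd hp.out).1 hk3.symm this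
  have hρρ : ∀ k ∈ Iset p l, ρ (ρ k) = k := by
    intro k hk
    obtain ⟨⟨hk1, hk2⟩, _⟩ := mem_Iset.1 hk
    simp only [hρ]
    omega
  have hre : Tsum p l s = ∑ k ∈ Iset p l, (pinv p (ρ k))^s := by
    rw [Tsum]
    refine Finset.sum_nbij' ρ ρ hρmem hρmem hρρ hρρ (fun k hk => ?_)
    rw [hρρ k hk]
  have hsplit : 2 * Tsum p l s + (s : ℤ_[p]) * q * Tsum p l (s+1)
      = ∑ k ∈ Iset p l, ((pinv p k)^s + (pinv p (ρ k))^s + (s : ℤ_[p]) * q * (pinv p k)^(s+1)) := by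
    rw [two_mul]
    nth_rewrite 2 [hre]
    rw [Tsum, Tsum, Finset.mul_sum]
    rw [← Finset.sum_add_distrib, ← Finset.sum_add_distrib]
  rw [hsplit]
  have hq2 : (p:ℤ_[p])^(2*l) = q^2 := by
    rw [hq, ← pow_mul]
    congr 1
    omega
  rw [hq2]
  refine Finset.dvd_sum ?_
  intro k hk
  obtain ⟨⟨hk1, hk2⟩, hk3⟩ := mem_Iset.1 hk
  have hρk3 : Nat.Coprime (ρ k) p := (mem_Iset.1 (hρmem k hk)).2
  set x : ℤ_[p] := ((k : ℕ) : ℤ_[p]) with hx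
  set a : ℤ_[p] := pinv p k with ha
  set y : ℤ_[p] := ((ρ k : ℕ) : ℤ_[p]) with hyy
  set b : ℤ_[p] := pinv p (ρ k) with hb
  have hax : a * x = 1 := pinv_mul hk3
  have hby : b * y = 1 := pinv_mul hρk3
  have hxy : x + y = q := by
    rw [hx, hyy, hq]
    have h9 : k + ρ k = p^l := by simp only [hρ]; omega
    calc ((k : ℕ) : ℤ_[p]) + ((ρ k : ℕ) : ℤ_[p]) = ((k + ρ k : ℕ) : ℤ_[p]) := by push_cast; ring
    _ = ((p^l : ℕ) : ℤ_[p]) := by rw [h9]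
    _ = (p:ℤ_[p])^l := by push_cast; ring
  have hy : y = q - x := eq_sub_of_add_eq' hxy
  obtain ⟨t, ht⟩ := binom_aux x q s hs
  have hqx : y^s = -(x - q)^s := by
    rw [hy, show q - x = -(x - q) from (neg_sub x q).symm, hodd.neg_pow]
  have hxx : x * x^(s-1) = x^s := by
    rw [← pow_succ']
    congr 1
    omega
  have key : (a^s + b^s + (s : ℤ_[p]) * q * a^(s+1)) * (x^(s+1) * y^s)
      = x * y^s + x^(s+1) + (s:ℤ_[p]) * q * y^s := by
    calc (a^s + b^s + (s : ℤ_[p]) * q * a^(s+1)) * (x^(s+1) * y^s)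
        = (a*x)^s * (x * y^s) + (b*y)^s * x^(s+1) + (s:ℤ_[p]) * q * ((a*x)^(s+1) * y^s) := by ring
    _ = x * y^s + x^(s+1) + (s:ℤ_[p]) * q * y^s := by rw [hax, hby]; ring
  have h2 : q^2 ∣ x * y^s + x^(s+1) + (s:ℤ_[p]) * q * y^s := by
    refine ⟨(s:ℤ_[p])^2 * x^(s-1) - x*t - (s:ℤ_[p])*q*t, ?_⟩
    rw [hqx, ht]
    linear_combination ((s:ℤ_[p])*q) * hxx
  have h4 : q^2 ∣ (a^s + b^s + (s : ℤ_[p]) * q * a^(s+1)) * (x^(s+1) * y^s) := by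
    rw [key]
    exact h2
  have h5 : (a^s + b^s + (s : ℤ_[p]) * q * a^(s+1)) * (x^(s+1) * y^s) * (a^(s+1) * b^s)
      = a^s + b^s + (s : ℤ_[p]) * q * a^(s+1) := by
    calc (a^s + b^s + (s : ℤ_[p]) * q * a^(s+1)) * (x^(s+1) * y^s) * (a^(s+1) * b^s)
        = (a^s + b^s + (s : ℤ_[p]) * q * a^(s+1)) * ((a*x)^(s+1) * (b*y)^s) := by ring
    _ = _ := by rw [hax, hby]; ring
  exact h5 ▸ Dvd.dvd.mul_right h4 _


lemma H_eq (l s : ℕ) : H p l s = ∑ k ∈ Iset p l, 1/(k:ℚ)^s := by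
  rw [H, Iset, Finset.sum_filter]

lemma H_cast (l s : ℕ) : ((H p l s : ℚ) : ℚ_[p]) = ((Tsum p l s : ℤ_[p]) : ℚ_[p]) := by
  rw [H_eq, Tsum]
  rw [show ((∑ k ∈ Iset p l, (pinv p k)^s : ℤ_[p]) : ℚ_[p])
      = ∑ k ∈ Iset p l, (((pinv p k)^s : ℤ_[p]) : ℚ_[p]) from
    map_sum (PadicInt.Coe.ringHom) _ _]
  push_cast
  refine Finset.sum_congr rfl (fun k hk => ?_)
  rw [coe_pinv (mem_Iset.1 hk).2, inv_pow, one_div]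

lemma bridge (l s m : ℕ) (h : (p:ℤ_[p])^m ∣ Tsum p l s) : ratCong (p^m) (H p l s) 0 := by
  set x : ℚ := H p l s with hx
  have hnum : ((x.num : ℤ) : ℚ_[p]) = ((Tsum p l s * ((x.den : ℕ) : ℤ_[p]) : ℤ_[p]) : ℚ_[p]) := by
    have hd : (x : ℚ_[p]) * ((x.den : ℕ) : ℚ_[p]) = ((x.num : ℤ) : ℚ_[p]) := by
      have h1 : ((x * (x.den : ℚ) : ℚ) : ℚ_[p]) = ((x.num : ℚ) : ℚ_[p]) := by
        congr 1
        rw [Rat.mul_den_eq_num]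
      push_cast at h1
      exact_mod_cast h1
    push_cast
    rw [← H_cast l s, ← hd]
  have hZ : ((x.num : ℤ) : ℤ_[p]) = Tsum p l s * ((x.den : ℕ) : ℤ_[p]) :=
    Subtype.coe_injective hnum
  have hdvd : (p:ℤ_[p])^m ∣ ((x.num : ℤ) : ℤ_[p]) := by
    rw [hZ]
    exact Dvd.dvd.mul_right h _
  have hnumdvd : ((p:ℤ))^m ∣ x.num := by
    have := (PadicInt.pow_p_dvd_int_iff (p := p) m x.num).1 hdvd
    exact_mod_cast this
  constructor
  · rw [sub_zero]
    rcases Nat.eq_zero_or_pos m with rfl | hm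
    · simpa using Nat.coprime_one_right _
    have hpden : ¬ p ∣ x.den := by
      intro hden
      have hpn : (p:ℤ) ∣ x.num := dvd_trans (dvd_pow_self _ (by omega)) hnumdvd
      have hpna : p ∣ x.num.natAbs := Int.natCast_dvd.1 hpn
      have hg := Nat.dvd_gcd hpna hden
      rw [x.reduced] at hg
      exact hp.out.one_lt.ne' (Nat.dvd_one.1 hg)
    exact ((Nat.Prime.coprime_iff_not_dvd hp.out).2 hpden).symm.pow_right m
  · rw [sub_zero]
    exact_mod_cast hnumdvd

end Padic

theorem harmonic_power_sum_congr (p l s : ℕ) (hp : p.Prime) (hp2 : p ≠ 2) (hl : 1 ≤ l)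
    (hs : 1 ≤ s) :
    (Odd s → (p - 1) ∣ (s + 1) → ¬ p ∣ s → ratCong (p ^ (2 * l - 1)) (H p l s) 0) ∧
    (Odd s → (¬ (p - 1) ∣ (s + 1) ∨ p ∣ s) → ratCong (p ^ (2 * l)) (H p l s) 0) ∧
    (Even s → (p - 1) ∣ s → ratCong (p ^ (l - 1)) (H p l s) 0) ∧
    (Even s → ¬ (p - 1) ∣ s → ratCong (p ^ l) (H p l s) 0) := by
  haveI : Fact p.Prime := ⟨hp⟩
  have hc2 : Nat.Coprime 2 p := (Nat.coprime_primes Nat.prime_two hp).2 (Ne.symm hp2)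
  have hcancel : ∀ m t : ℕ, (p:ℤ_[p])^m ∣ 2 * Tsum p l t → (p:ℤ_[p])^m ∣ Tsum p l t := by
    intro m t hdvd
    have h2 : pinv p 2 * ((2:ℕ) : ℤ_[p]) = 1 := pinv_mul hc2
    have h2' : pinv p 2 * (2 : ℤ_[p]) = 1 := by exact_mod_cast h2
    have hT : Tsum p l t = pinv p 2 * (2 * Tsum p l t) := by
      rw [← mul_assoc, h2', one_mul]
    rw [hT]
    exact Dvd.dvd.mul_left hdvd _
  refine ⟨?_, ?_, ?_, ?_⟩
  · -- case (i)
    intro hodd _ _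
    have h3 := M3 (p := p) l s hl hs hodd
    have hT' := M2 (p := p) l (s+1) hl
    have hterm : (p:ℤ_[p])^(2*l-1) ∣ (s : ℤ_[p]) * (p:ℤ_[p])^l * Tsum p l (s+1) := by
      have he : (p:ℤ_[p])^(2*l-1) = (p:ℤ_[p])^l * (p:ℤ_[p])^(l-1) := by
        rw [← pow_add]
        congr 1
        omega
      rw [he, mul_assoc]
      exact Dvd.dvd.mul_left (mul_dvd_mul_left _ hT') _
    have h2T : (p:ℤ_[p])^(2*l-1) ∣ 2 * Tsum p l s := by
      have ha : (p:ℤ_[p])^(2*l-1) ∣ 2 * Tsum p l s + (s:ℤ_[p]) * (p:ℤ_[p])^l * Tsum p l (s+1) :=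
        dvd_trans (pow_dvd_pow _ (by omega)) h3
      have := dvd_sub ha hterm
      simpa using this
    exact bridge l s _ (hcancel _ _ h2T)
  · -- case (ii)
    intro hodd hcase
    have h3 := M3 (p := p) l s hl hs hodd
    have hterm : (p:ℤ_[p])^(2*l) ∣ (s : ℤ_[p]) * (p:ℤ_[p])^l * Tsum p l (s+1) := by
      rcases hcase with hns | hps
      · have hT' := M1 (p := p) l (s+1) hl hns
        have he : (p:ℤ_[p])^(2*l) = (p:ℤ_[p])^l * (p:ℤ_[p])^l := by
          rw [← pow_add]
          congr 1
          omega
        rw [he, mul_assoc]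
        exact Dvd.dvd.mul_left (mul_dvd_mul_left _ hT') _
      · have hT' := M2 (p := p) l (s+1) hl
        have hsp : (p:ℤ_[p]) ∣ (s:ℤ_[p]) := by
          obtain ⟨c, rfl⟩ := hps
          push_cast
          exact Dvd.intro c rfl
        have he : (p:ℤ_[p])^(2*l) = ((p:ℤ_[p]) * (p:ℤ_[p])^l) * (p:ℤ_[p])^(l-1) := by
          rw [← pow_succ', ← pow_add]
          congr 1
          omega
        rw [he]
        exact mul_dvd_mul (mul_dvd_mul hsp (dvd_refl _)) hT'
    have h2T : (p:ℤ_[p])^(2*l) ∣ 2 * Tsum p l s := by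
      have := dvd_sub h3 hterm
      simpa using this
    exact bridge l s _ (hcancel _ _ h2T)
  · -- case (iii)
    intro _ _
    exact bridge l s _ (M2 (p := p) l s hl)
  · -- case (iv)
    intro _ hns
    exact bridge l s _ (M1 (p := p) l s hl hns)
end

section
/- Let p and q be distinct odd primes. Then Z(pq) = ∑_{i+j+k=pq, i,j,k ∈ P_p} 1/(ijk) - 3 ∑_{a=1}^{p-1} (1/((p-a)q)) ∑_{i+j=aq, (ij,p)=1} 1/(ij) + 2 ∑_{a+b+c=p, a,b,c ∈ P_p} 1/(aq·bq·cq), where all sums are over ordered tuples of positive integers, i, j, k (respectively a, b, c) range over positive integers coprime to p with the indicated sum, and in the middle sum (i, j) ranges over ordered pairs of positive integers with i + j = aq and ij coprime to p. -/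
open Finset

lemma sum_dvd_reindex (p q : ℕ) (hq : 0 < q) (g : ℕ → ℚ) :
    ∑ i ∈ Icc 1 (p*q), (if q ∣ i then g i else 0) = ∑ a ∈ Icc 1 p, g (a*q) := by
  rw [← Finset.sum_filter]
  have himg : (Icc 1 (p*q)).filter (q ∣ ·) = (Icc 1 p).image (· * q) := by
    ext i
    simp only [Finset.mem_filter, Finset.mem_image, Finset.mem_Icc]
    constructor
    · rintro ⟨⟨h1, h2⟩, c, rfl⟩
      refine ⟨c, ⟨?_, ?_⟩, (mul_comm q c).symm⟩
      · rcases Nat.eq_zero_or_pos c with rfl | h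
        · simp at h1
        · exact h
      · rw [mul_comm q c] at h2
        exact Nat.le_of_mul_le_mul_right h2 hq
    · rintro ⟨a, ⟨h1, h2⟩, rfl⟩
      exact ⟨⟨Nat.one_le_iff_ne_zero.mpr (by positivity), Nat.mul_le_mul_right _ h2⟩,
        ⟨a, mul_comm a q⟩⟩
  rw [himg, Finset.sum_image]
  intro a _ b _ h
  exact Nat.eq_of_mul_eq_mul_right hq h

lemma sum_swap13 (s : Finset ℕ) (F : ℕ → ℕ → ℕ → ℚ) :
    ∑ i ∈ s, ∑ j ∈ s, ∑ k ∈ s, F i j k = ∑ i ∈ s, ∑ j ∈ s, ∑ k ∈ s, F k j i := by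
  calc ∑ i ∈ s, ∑ j ∈ s, ∑ k ∈ s, F i j k
      = ∑ i ∈ s, ∑ k ∈ s, ∑ j ∈ s, F i j k :=
        Finset.sum_congr rfl fun i _ => Finset.sum_comm
    _ = ∑ k ∈ s, ∑ i ∈ s, ∑ j ∈ s, F i j k := Finset.sum_comm
    _ = ∑ k ∈ s, ∑ j ∈ s, ∑ i ∈ s, F i j k :=
        Finset.sum_congr rfl fun k _ => Finset.sum_comm

lemma aux_pointwise (p q i j k : ℕ) (hq : q.Prime) :
    (if i + j + k = p*q ∧ Nat.Coprime i (p*q) ∧ Nat.Coprime j (p*q) ∧ Nat.Coprime k (p*q) then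
      1 / ((i : ℚ) * j * k) else 0)
    + ((if i + j + k = p*q ∧ Nat.Coprime i p ∧ Nat.Coprime j p ∧ Nat.Coprime k p ∧ q ∣ i then
        1 / ((i : ℚ) * j * k) else 0)
      + (if i + j + k = p*q ∧ Nat.Coprime i p ∧ Nat.Coprime j p ∧ Nat.Coprime k p ∧ q ∣ j then
        1 / ((i : ℚ) * j * k) else 0)
      + (if i + j + k = p*q ∧ Nat.Coprime i p ∧ Nat.Coprime j p ∧ Nat.Coprime k p ∧ q ∣ k then
        1 / ((i : ℚ) * j * k) else 0))
    = (if i + j + k = p*q ∧ Nat.Coprime i p ∧ Nat.Coprime j p ∧ Nat.Coprime k p then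
        1 / ((i : ℚ) * j * k) else 0)
      + 2 * (if i + j + k = p*q ∧ Nat.Coprime i p ∧ Nat.Coprime j p ∧ Nat.Coprime k p
              ∧ q ∣ i ∧ q ∣ j ∧ q ∣ k then 1 / ((i : ℚ) * j * k) else 0) := by
  by_cases hsum : i + j + k = p * q
  · have hq' : ∀ x : ℕ, Nat.Coprime x q ↔ ¬ q ∣ x := fun x =>
      Nat.coprime_comm.trans hq.coprime_iff_not_dvd
    have himp : ∀ {x y z : ℕ}, x + y + z = p*q → q ∣ x → q ∣ y → q ∣ z := by
      intro x y z hxyz hx hy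
      have h := Nat.dvd_sub (Nat.dvd_sub (dvd_mul_left q p) hx) hy
      rwa [show p*q - x - y = z by omega] at h
    by_cases hci : Nat.Coprime i p
    · by_cases hcj : Nat.Coprime j p
      · by_cases hck : Nat.Coprime k p
        · have hci' : (Nat.Coprime i p) = True := eq_true hci
          have hcj' : (Nat.Coprime j p) = True := eq_true hcj
          have hck' : (Nat.Coprime k p) = True := eq_true hck
          by_cases hdi : q ∣ i <;> by_cases hdj : q ∣ j <;> by_cases hdk : q ∣ k
          · simp only [hsum, hci', hcj', hck', eq_self_iff_true, true_and, and_true,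
              Nat.coprime_mul_iff_right, hq', eq_true hdi, eq_true hdj, eq_true hdk,
              not_true, and_false, false_and, if_true, if_false, ite_true, ite_false]
            ring
          · exact absurd (himp hsum hdi hdj) hdk
          · exact absurd (himp (by omega : i + k + j = p*q) hdi hdk) hdj
          · simp [hsum, hci', hcj', hck', hdi, hdj, hdk, Nat.coprime_mul_iff_right, hq']
          · exact absurd (himp (by omega : j + k + i = p*q) hdj hdk) hdi
          · simp [hsum, hci', hcj', hck', hdi, hdj, hdk, Nat.coprime_mul_iff_right, hq']
          · simp [hsum, hci', hcj', hck', hdi, hdj, hdk, Nat.coprime_mul_iff_right, hq']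
          · simp [hsum, hci', hcj', hck', hdi, hdj, hdk, Nat.coprime_mul_iff_right, hq']
        · simp [hsum, hci, hcj, hck, Nat.coprime_mul_iff_right]
      · simp [hsum, hci, hcj, Nat.coprime_mul_iff_right]
    · simp [hsum, hci, Nat.coprime_mul_iff_right]
  · simp [hsum]

lemma aux_collapse (p q m : ℕ) (hp : p.Prime) (hqp : Nat.Coprime q p)
    (hm : m ∈ Finset.Ico 1 p) :
    (∑ j ∈ Icc 1 (p*q), ∑ k ∈ Icc 1 (p*q),
      if m*q + j + k = p*q ∧ Nat.Coprime (m*q) p ∧ Nat.Coprime j p ∧ Nat.Coprime k p then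
        1 / (((m*q : ℕ) : ℚ) * j * k) else 0)
    = 1 / ((m : ℚ) * (q : ℚ)) *
        ∑ i ∈ Finset.Ico 1 ((p-m)*q),
          (if Nat.Coprime (i * ((p-m)*q - i)) p then
            1 / ((i : ℚ) * (((p-m)*q - i : ℕ) : ℚ)) else 0) := by
  obtain ⟨hm1, hm2⟩ := Finset.mem_Ico.mp hm
  have hsadd : (p-m)*q + m*q = p*q := by
    rw [← add_mul, Nat.sub_add_cancel (le_of_lt hm2)]
  have hcm : Nat.Coprime (m*q) p :=
    Nat.Coprime.mul
      (Nat.coprime_comm.mp (hp.coprime_iff_not_dvd.mpr (Nat.not_dvd_of_pos_of_lt hm1 hm2))) hqp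
  have hstep : ∀ j : ℕ,
      (∑ k ∈ Icc 1 (p*q),
        if m*q + j + k = p*q ∧ Nat.Coprime (m*q) p ∧ Nat.Coprime j p ∧ Nat.Coprime k p then
          1 / (((m*q : ℕ) : ℚ) * j * k) else 0)
      = if j < (p-m)*q ∧ Nat.Coprime j p ∧ Nat.Coprime ((p-m)*q - j) p then
          1 / ((m : ℚ) * (q : ℚ)) * (1 / ((j : ℚ) * (((p-m)*q - j : ℕ) : ℚ))) else 0 := by
    intro j
    by_cases hj : j < (p-m)*q ∧ Nat.Coprime j p ∧ Nat.Coprime ((p-m)*q - j) p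
    · obtain ⟨hjs, hcj, hcsj⟩ := hj
      have h0 : ∀ k ∈ Icc 1 (p*q), k ≠ (p-m)*q - j →
          (if m*q + j + k = p*q ∧ Nat.Coprime (m*q) p ∧ Nat.Coprime j p ∧ Nat.Coprime k p then
            1 / (((m*q : ℕ) : ℚ) * j * k) else 0) = 0 := by
        intro k _ hne
        rw [if_neg]
        rintro ⟨h1, -⟩
        exact hne (by omega)
      have h1 : ((p-m)*q - j) ∉ Icc 1 (p*q) →
          (if m*q + j + ((p-m)*q - j) = p*q ∧ Nat.Coprime (m*q) p ∧ Nat.Coprime j p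
              ∧ Nat.Coprime ((p-m)*q - j) p then
            1 / (((m*q : ℕ) : ℚ) * j * ((((p:ℕ)-m)*q - j : ℕ) : ℚ)) else 0) = 0 := by
        intro habs
        exact absurd (Finset.mem_Icc.mpr ⟨by omega, by omega⟩) habs
      rw [Finset.sum_eq_single ((p-m)*q - j) h0 h1,
        if_pos ⟨by omega, hcm, hcj, hcsj⟩, if_pos ⟨hjs, hcj, hcsj⟩]
      push_cast
      ring
    · rw [if_neg hj]
      refine Finset.sum_eq_zero fun k hk => ?_
      rw [if_neg]
      rintro ⟨h1, -, hcj, hck⟩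
      have hk1 := (Finset.mem_Icc.mp hk).1
      refine hj ⟨by omega, hcj, ?_⟩
      rw [show (p-m)*q - j = k by omega]
      exact hck
  rw [Finset.sum_congr rfl fun j _ => hstep j]
  have hsub : Finset.Ico 1 ((p-m)*q) ⊆ Finset.Icc 1 (p*q) := by
    intro x hx
    have hx' := Finset.mem_Ico.mp hx
    exact Finset.mem_Icc.mpr ⟨hx'.1, by omega⟩
  have hvan : ∀ x ∈ Icc 1 (p*q), x ∉ Finset.Ico 1 ((p-m)*q) →
      (if x < (p-m)*q ∧ Nat.Coprime x p ∧ Nat.Coprime ((p-m)*q - x) p then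
        1 / ((m : ℚ) * (q : ℚ)) * (1 / ((x : ℚ) * (((p-m)*q - x : ℕ) : ℚ))) else 0) = 0 := by
    intro x hx hnx
    rw [if_neg]
    rintro ⟨hlt, -⟩
    exact hnx (Finset.mem_Ico.mpr ⟨(Finset.mem_Icc.mp hx).1, hlt⟩)
  rw [← Finset.sum_subset hsub hvan, Finset.mul_sum]
  refine Finset.sum_congr rfl fun j hj => ?_
  have hjm := Finset.mem_Ico.mp hj
  by_cases hcc : Nat.Coprime (j * ((p-m)*q - j)) p
  · rw [if_pos ⟨hjm.2, (Nat.coprime_mul_iff_left.mp hcc).1, (Nat.coprime_mul_iff_left.mp hcc).2⟩,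
      if_pos hcc]
  · rw [if_neg, if_neg hcc, mul_zero]
    rintro ⟨-, ha, hb⟩
    exact hcc (Nat.coprime_mul_iff_left.mpr ⟨ha, hb⟩)

theorem Z_pq_decomposition (p q : ℕ) (hp : p.Prime) (hq : q.Prime) (hp2 : p ≠ 2) (hq2 : q ≠ 2)
    (hpq : p ≠ q) :
    Z (p * q) =
      Zp (p * q) p
        - 3 * ∑ a ∈ Finset.Ico 1 p, (1 / (((p - a : ℕ) : ℚ) * (q : ℚ))) *
            ∑ i ∈ Finset.Ico 1 (a * q),
              (if Nat.Coprime (i * (a * q - i)) p then 1 / ((i : ℚ) * ((a * q - i : ℕ) : ℚ))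
               else 0)
        + 2 * ∑ a ∈ Finset.Icc 1 p, ∑ b ∈ Finset.Icc 1 p, ∑ c ∈ Finset.Icc 1 p,
            (if a + b + c = p ∧ Nat.Coprime a p ∧ Nat.Coprime b p ∧ Nat.Coprime c p then
              1 / (((a : ℚ) * q) * ((b : ℚ) * q) * ((c : ℚ) * q))
             else 0) := by
  have hq0 : 0 < q := hq.pos
  have hqp : Nat.Coprime q p := (Nat.coprime_primes hq hp).mpr fun h => hpq h.symm
  -- the four auxiliary triple sums
  have comb0 :
      (∑ i ∈ Icc 1 (p*q), ∑ j ∈ Icc 1 (p*q), ∑ k ∈ Icc 1 (p*q),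
        (if i + j + k = p*q ∧ Nat.Coprime i (p*q) ∧ Nat.Coprime j (p*q) ∧ Nat.Coprime k (p*q) then
          1 / ((i : ℚ) * j * k) else 0))
      + ((∑ i ∈ Icc 1 (p*q), ∑ j ∈ Icc 1 (p*q), ∑ k ∈ Icc 1 (p*q),
          (if i + j + k = p*q ∧ Nat.Coprime i p ∧ Nat.Coprime j p ∧ Nat.Coprime k p ∧ q ∣ i then
            1 / ((i : ℚ) * j * k) else 0))
        + (∑ i ∈ Icc 1 (p*q), ∑ j ∈ Icc 1 (p*q), ∑ k ∈ Icc 1 (p*q),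
          (if i + j + k = p*q ∧ Nat.Coprime i p ∧ Nat.Coprime j p ∧ Nat.Coprime k p ∧ q ∣ j then
            1 / ((i : ℚ) * j * k) else 0))
        + (∑ i ∈ Icc 1 (p*q), ∑ j ∈ Icc 1 (p*q), ∑ k ∈ Icc 1 (p*q),
          (if i + j + k = p*q ∧ Nat.Coprime i p ∧ Nat.Coprime j p ∧ Nat.Coprime k p ∧ q ∣ k then
            1 / ((i : ℚ) * j * k) else 0)))
      = (∑ i ∈ Icc 1 (p*q), ∑ j ∈ Icc 1 (p*q), ∑ k ∈ Icc 1 (p*q),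
          (if i + j + k = p*q ∧ Nat.Coprime i p ∧ Nat.Coprime j p ∧ Nat.Coprime k p then
            1 / ((i : ℚ) * j * k) else 0))
        + 2 * (∑ i ∈ Icc 1 (p*q), ∑ j ∈ Icc 1 (p*q), ∑ k ∈ Icc 1 (p*q),
          (if i + j + k = p*q ∧ Nat.Coprime i p ∧ Nat.Coprime j p ∧ Nat.Coprime k p
              ∧ q ∣ i ∧ q ∣ j ∧ q ∣ k then
            1 / ((i : ℚ) * j * k) else 0)) := by
    simp only [← Finset.sum_add_distrib, Finset.mul_sum]
    refine Finset.sum_congr rfl fun i _ => Finset.sum_congr rfl fun j _ =>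
      Finset.sum_congr rfl fun k _ => ?_
    linarith [aux_pointwise p q i j k hq]
  -- the q∣j sum equals the q∣i sum
  have hS2 :
      (∑ i ∈ Icc 1 (p*q), ∑ j ∈ Icc 1 (p*q), ∑ k ∈ Icc 1 (p*q),
        (if i + j + k = p*q ∧ Nat.Coprime i p ∧ Nat.Coprime j p ∧ Nat.Coprime k p ∧ q ∣ j then
          1 / ((i : ℚ) * j * k) else 0))
      = (∑ i ∈ Icc 1 (p*q), ∑ j ∈ Icc 1 (p*q), ∑ k ∈ Icc 1 (p*q),
        (if i + j + k = p*q ∧ Nat.Coprime i p ∧ Nat.Coprime j p ∧ Nat.Coprime k p ∧ q ∣ i then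
          1 / ((i : ℚ) * j * k) else 0)) := by
    rw [Finset.sum_comm]
    refine Finset.sum_congr rfl fun i _ => Finset.sum_congr rfl fun j _ =>
      Finset.sum_congr rfl fun k _ => ?_
    by_cases h : i + j + k = p*q ∧ Nat.Coprime i p ∧ Nat.Coprime j p ∧ Nat.Coprime k p ∧ q ∣ i
    · rw [if_pos ⟨by omega, h.2.2.1, h.2.1, h.2.2.2.1, h.2.2.2.2⟩, if_pos h]
      ring
    · rw [if_neg, if_neg h]
      rintro ⟨ha, hb, hc, hd, he⟩
      exact h ⟨by omega, hc, hb, hd, he⟩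
  -- the q∣k sum equals the q∣i sum
  have hS3 :
      (∑ i ∈ Icc 1 (p*q), ∑ j ∈ Icc 1 (p*q), ∑ k ∈ Icc 1 (p*q),
        (if i + j + k = p*q ∧ Nat.Coprime i p ∧ Nat.Coprime j p ∧ Nat.Coprime k p ∧ q ∣ k then
          1 / ((i : ℚ) * j * k) else 0))
      = (∑ i ∈ Icc 1 (p*q), ∑ j ∈ Icc 1 (p*q), ∑ k ∈ Icc 1 (p*q),
        (if i + j + k = p*q ∧ Nat.Coprime i p ∧ Nat.Coprime j p ∧ Nat.Coprime k p ∧ q ∣ i then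
          1 / ((i : ℚ) * j * k) else 0)) := by
    rw [sum_swap13]
    refine Finset.sum_congr rfl fun i _ => Finset.sum_congr rfl fun j _ =>
      Finset.sum_congr rfl fun k _ => ?_
    by_cases h : i + j + k = p*q ∧ Nat.Coprime i p ∧ Nat.Coprime j p ∧ Nat.Coprime k p ∧ q ∣ i
    · rw [if_pos ⟨by omega, h.2.2.2.1, h.2.2.1, h.2.1, h.2.2.2.2⟩, if_pos h]
      ring
    · rw [if_neg, if_neg h]
      rintro ⟨ha, hb, hc, hd, he⟩
      exact h ⟨by omega, hd, hc, hb, he⟩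
  -- the q∣i sum equals the middle sum of the statement
  have hM :
      (∑ i ∈ Icc 1 (p*q), ∑ j ∈ Icc 1 (p*q), ∑ k ∈ Icc 1 (p*q),
        (if i + j + k = p*q ∧ Nat.Coprime i p ∧ Nat.Coprime j p ∧ Nat.Coprime k p ∧ q ∣ i then
          1 / ((i : ℚ) * j * k) else 0))
      = ∑ a ∈ Finset.Ico 1 p, (1 / (((p - a : ℕ) : ℚ) * (q : ℚ))) *
          ∑ i ∈ Finset.Ico 1 (a * q),
            (if Nat.Coprime (i * (a * q - i)) p then 1 / ((i : ℚ) * ((a * q - i : ℕ) : ℚ))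
             else 0) := by
    calc (∑ i ∈ Icc 1 (p*q), ∑ j ∈ Icc 1 (p*q), ∑ k ∈ Icc 1 (p*q),
        (if i + j + k = p*q ∧ Nat.Coprime i p ∧ Nat.Coprime j p ∧ Nat.Coprime k p ∧ q ∣ i then
          1 / ((i : ℚ) * j * k) else 0))
        = ∑ i ∈ Icc 1 (p*q), (if q ∣ i then
            (∑ j ∈ Icc 1 (p*q), ∑ k ∈ Icc 1 (p*q),
              if i + j + k = p*q ∧ Nat.Coprime i p ∧ Nat.Coprime j p ∧ Nat.Coprime k p then
                1 / ((i : ℚ) * j * k) else 0) else 0) := by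
          refine Finset.sum_congr rfl fun i _ => ?_
          by_cases hqi : q ∣ i <;> simp [hqi]
      _ = ∑ m ∈ Icc 1 p, (∑ j ∈ Icc 1 (p*q), ∑ k ∈ Icc 1 (p*q),
            if m*q + j + k = p*q ∧ Nat.Coprime (m*q) p ∧ Nat.Coprime j p ∧ Nat.Coprime k p then
              1 / (((m*q : ℕ) : ℚ) * j * k) else 0) :=
          sum_dvd_reindex p q hq0 (fun x => ∑ j ∈ Icc 1 (p*q), ∑ k ∈ Icc 1 (p*q),
            if x + j + k = p*q ∧ Nat.Coprime x p ∧ Nat.Coprime j p ∧ Nat.Coprime k p then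
              1 / ((x : ℚ) * j * k) else 0)
      _ = ∑ m ∈ Finset.Ico 1 p, (∑ j ∈ Icc 1 (p*q), ∑ k ∈ Icc 1 (p*q),
            if m*q + j + k = p*q ∧ Nat.Coprime (m*q) p ∧ Nat.Coprime j p ∧ Nat.Coprime k p then
              1 / (((m*q : ℕ) : ℚ) * j * k) else 0) := by
          refine (Finset.sum_subset (fun x hx => ?_) fun x hx hnx => ?_).symm
          · have hx' := Finset.mem_Ico.mp hx
            exact Finset.mem_Icc.mpr ⟨hx'.1, by omega⟩
          · have hx' := Finset.mem_Icc.mp hx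
            have hxp : x = p := by
              by_contra hne
              exact hnx (Finset.mem_Ico.mpr ⟨hx'.1, by omega⟩)
            subst hxp
            refine Finset.sum_eq_zero fun j hj => Finset.sum_eq_zero fun k hk => ?_
            rw [if_neg]
            rintro ⟨h1, -⟩
            have := (Finset.mem_Icc.mp hj).1
            have := (Finset.mem_Icc.mp hk).1
            omega
      _ = ∑ m ∈ Finset.Ico 1 p, 1 / ((m : ℚ) * (q : ℚ)) *
            ∑ i ∈ Finset.Ico 1 ((p-m)*q),
              (if Nat.Coprime (i * ((p-m)*q - i)) p then
                1 / ((i : ℚ) * (((p-m)*q - i : ℕ) : ℚ)) else 0) :=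
          Finset.sum_congr rfl fun m hm => aux_collapse p q m hp hqp hm
      _ = ∑ a ∈ Finset.Ico 1 p, (1 / (((p - a : ℕ) : ℚ) * (q : ℚ))) *
            ∑ i ∈ Finset.Ico 1 (a * q),
              (if Nat.Coprime (i * (a * q - i)) p then 1 / ((i : ℚ) * ((a * q - i : ℕ) : ℚ))
               else 0) := by
          refine Finset.sum_nbij' (fun m => p - m) (fun a => p - a)
            (fun m hm => ?_) (fun a ha => ?_) (fun m hm => ?_) (fun a ha => ?_)
            (fun m hm => ?_)
          · have := Finset.mem_Ico.mp hm
            simp only [Finset.mem_Ico]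
            omega
          · have := Finset.mem_Ico.mp ha
            simp only [Finset.mem_Ico]
            omega
          · have := Finset.mem_Ico.mp hm
            show p - (p - m) = m
            omega
          · have := Finset.mem_Ico.mp ha
            show p - (p - a) = a
            omega
          · have hm' := Finset.mem_Ico.mp hm
            show _ = 1 / (((p - (p - m) : ℕ) : ℚ) * (q : ℚ)) *
              ∑ i ∈ Finset.Ico 1 ((p - m) * q),
                (if Nat.Coprime (i * ((p - m) * q - i)) p then
                  1 / ((i : ℚ) * (((p - m) * q - i : ℕ) : ℚ)) else 0)
            rw [show p - (p - m) = m by omega]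
  -- the fully divisible sum equals the last sum of the statement
  have hD :
      (∑ i ∈ Icc 1 (p*q), ∑ j ∈ Icc 1 (p*q), ∑ k ∈ Icc 1 (p*q),
        (if i + j + k = p*q ∧ Nat.Coprime i p ∧ Nat.Coprime j p ∧ Nat.Coprime k p
            ∧ q ∣ i ∧ q ∣ j ∧ q ∣ k then
          1 / ((i : ℚ) * j * k) else 0))
      = ∑ a ∈ Finset.Icc 1 p, ∑ b ∈ Finset.Icc 1 p, ∑ c ∈ Finset.Icc 1 p,
          (if a + b + c = p ∧ Nat.Coprime a p ∧ Nat.Coprime b p ∧ Nat.Coprime c p then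
            1 / (((a : ℚ) * q) * ((b : ℚ) * q) * ((c : ℚ) * q))
           else 0) := by
    have h2 : ∀ x : ℕ, Nat.Coprime (x*q) p ↔ Nat.Coprime x p := fun x => by
      rw [Nat.coprime_mul_iff_left]
      exact ⟨fun h => h.1, fun h => ⟨h, hqp⟩⟩
    calc (∑ i ∈ Icc 1 (p*q), ∑ j ∈ Icc 1 (p*q), ∑ k ∈ Icc 1 (p*q),
        (if i + j + k = p*q ∧ Nat.Coprime i p ∧ Nat.Coprime j p ∧ Nat.Coprime k p
            ∧ q ∣ i ∧ q ∣ j ∧ q ∣ k then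
          1 / ((i : ℚ) * j * k) else 0))
        = ∑ i ∈ Icc 1 (p*q), (if q ∣ i then
            (∑ j ∈ Icc 1 (p*q), ∑ k ∈ Icc 1 (p*q),
              if i + j + k = p*q ∧ Nat.Coprime i p ∧ Nat.Coprime j p ∧ Nat.Coprime k p
                  ∧ q ∣ j ∧ q ∣ k then
                1 / ((i : ℚ) * j * k) else 0) else 0) := by
          refine Finset.sum_congr rfl fun i _ => ?_
          by_cases hqi : q ∣ i <;> simp [hqi]
      _ = ∑ a ∈ Icc 1 p, (∑ j ∈ Icc 1 (p*q), ∑ k ∈ Icc 1 (p*q),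
            if a*q + j + k = p*q ∧ Nat.Coprime (a*q) p ∧ Nat.Coprime j p ∧ Nat.Coprime k p
                ∧ q ∣ j ∧ q ∣ k then
              1 / (((a*q : ℕ) : ℚ) * j * k) else 0) :=
          sum_dvd_reindex p q hq0 (fun x => ∑ j ∈ Icc 1 (p*q), ∑ k ∈ Icc 1 (p*q),
            if x + j + k = p*q ∧ Nat.Coprime x p ∧ Nat.Coprime j p ∧ Nat.Coprime k p
                ∧ q ∣ j ∧ q ∣ k then
              1 / ((x : ℚ) * j * k) else 0)
      _ = ∑ a ∈ Icc 1 p, ∑ b ∈ Icc 1 p, (∑ k ∈ Icc 1 (p*q),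
            if a*q + b*q + k = p*q ∧ Nat.Coprime (a*q) p ∧ Nat.Coprime (b*q) p
                ∧ Nat.Coprime k p ∧ q ∣ k then
              1 / (((a*q : ℕ) : ℚ) * ((b*q : ℕ) : ℚ) * k) else 0) := by
          refine Finset.sum_congr rfl fun a _ => ?_
          calc (∑ j ∈ Icc 1 (p*q), ∑ k ∈ Icc 1 (p*q),
              if a*q + j + k = p*q ∧ Nat.Coprime (a*q) p ∧ Nat.Coprime j p ∧ Nat.Coprime k p
                  ∧ q ∣ j ∧ q ∣ k then
                1 / (((a*q : ℕ) : ℚ) * j * k) else 0)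
              = ∑ j ∈ Icc 1 (p*q), (if q ∣ j then
                  (∑ k ∈ Icc 1 (p*q),
                    if a*q + j + k = p*q ∧ Nat.Coprime (a*q) p ∧ Nat.Coprime j p
                        ∧ Nat.Coprime k p ∧ q ∣ k then
                      1 / (((a*q : ℕ) : ℚ) * j * k) else 0) else 0) := by
                refine Finset.sum_congr rfl fun j _ => ?_
                by_cases hqj : q ∣ j <;> simp [hqj]
            _ = ∑ b ∈ Icc 1 p, (∑ k ∈ Icc 1 (p*q),
                  if a*q + b*q + k = p*q ∧ Nat.Coprime (a*q) p ∧ Nat.Coprime (b*q) p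
                      ∧ Nat.Coprime k p ∧ q ∣ k then
                    1 / (((a*q : ℕ) : ℚ) * ((b*q : ℕ) : ℚ) * k) else 0) :=
                sum_dvd_reindex p q hq0 (fun x => ∑ k ∈ Icc 1 (p*q),
                  if a*q + x + k = p*q ∧ Nat.Coprime (a*q) p ∧ Nat.Coprime x p
                      ∧ Nat.Coprime k p ∧ q ∣ k then
                    1 / (((a*q : ℕ) : ℚ) * x * k) else 0)
      _ = ∑ a ∈ Icc 1 p, ∑ b ∈ Icc 1 p, ∑ c ∈ Icc 1 p,
            (if a*q + b*q + c*q = p*q ∧ Nat.Coprime (a*q) p ∧ Nat.Coprime (b*q) p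
                ∧ Nat.Coprime (c*q) p then
              1 / (((a*q : ℕ) : ℚ) * ((b*q : ℕ) : ℚ) * ((c*q : ℕ) : ℚ)) else 0) := by
          refine Finset.sum_congr rfl fun a _ => Finset.sum_congr rfl fun b _ => ?_
          calc (∑ k ∈ Icc 1 (p*q),
              if a*q + b*q + k = p*q ∧ Nat.Coprime (a*q) p ∧ Nat.Coprime (b*q) p
                  ∧ Nat.Coprime k p ∧ q ∣ k then
                1 / (((a*q : ℕ) : ℚ) * ((b*q : ℕ) : ℚ) * k) else 0)
              = ∑ k ∈ Icc 1 (p*q), (if q ∣ k then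
                  (if a*q + b*q + k = p*q ∧ Nat.Coprime (a*q) p ∧ Nat.Coprime (b*q) p
                      ∧ Nat.Coprime k p then
                    1 / (((a*q : ℕ) : ℚ) * ((b*q : ℕ) : ℚ) * k) else 0) else 0) := by
                refine Finset.sum_congr rfl fun k _ => ?_
                by_cases hqk : q ∣ k <;> simp [hqk]
            _ = ∑ c ∈ Icc 1 p,
                  (if a*q + b*q + c*q = p*q ∧ Nat.Coprime (a*q) p ∧ Nat.Coprime (b*q) p
                      ∧ Nat.Coprime (c*q) p then
                    1 / (((a*q : ℕ) : ℚ) * ((b*q : ℕ) : ℚ) * ((c*q : ℕ) : ℚ)) else 0) :=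
                sum_dvd_reindex p q hq0 (fun x =>
                  if a*q + b*q + x = p*q ∧ Nat.Coprime (a*q) p ∧ Nat.Coprime (b*q) p
                      ∧ Nat.Coprime x p then
                    1 / (((a*q : ℕ) : ℚ) * ((b*q : ℕ) : ℚ) * x) else 0)
      _ = ∑ a ∈ Finset.Icc 1 p, ∑ b ∈ Finset.Icc 1 p, ∑ c ∈ Finset.Icc 1 p,
            (if a + b + c = p ∧ Nat.Coprime a p ∧ Nat.Coprime b p ∧ Nat.Coprime c p then
              1 / (((a : ℚ) * q) * ((b : ℚ) * q) * ((c : ℚ) * q))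
             else 0) := by
          refine Finset.sum_congr rfl fun a _ => Finset.sum_congr rfl fun b _ =>
            Finset.sum_congr rfl fun c _ => ?_
          have h1 : (a*q + b*q + c*q = p*q) ↔ (a + b + c = p) := by
            constructor
            · intro h
              exact Nat.eq_of_mul_eq_mul_right hq0 (by rw [add_mul, add_mul]; exact h)
            · intro h
              rw [← h]
              ring
          by_cases hco : a + b + c = p ∧ Nat.Coprime a p ∧ Nat.Coprime b p ∧ Nat.Coprime c p
          · rw [if_pos ⟨h1.mpr hco.1, (h2 a).mpr hco.2.1, (h2 b).mpr hco.2.2.1,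
              (h2 c).mpr hco.2.2.2⟩, if_pos hco]
            push_cast
            ring
          · rw [if_neg, if_neg hco]
            rintro ⟨hs, hca, hcb, hcc⟩
            exact hco ⟨h1.mp hs, (h2 a).mp hca, (h2 b).mp hcb, (h2 c).mp hcc⟩
  have hZ : Z (p * q) =
      ∑ i ∈ Icc 1 (p*q), ∑ j ∈ Icc 1 (p*q), ∑ k ∈ Icc 1 (p*q),
        (if i + j + k = p*q ∧ Nat.Coprime i (p*q) ∧ Nat.Coprime j (p*q) ∧ Nat.Coprime k (p*q) then
          1 / ((i : ℚ) * j * k) else 0) := rfl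
  have hZp : Zp (p * q) p =
      ∑ i ∈ Icc 1 (p*q), ∑ j ∈ Icc 1 (p*q), ∑ k ∈ Icc 1 (p*q),
        (if i + j + k = p*q ∧ Nat.Coprime i p ∧ Nat.Coprime j p ∧ Nat.Coprime k p then
          1 / ((i : ℚ) * j * k) else 0) := rfl
  rw [hZ, hZp, ← hM, ← hD]
  rw [hS2, hS3] at comb0
  linarith [comb0]
end
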